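/- arXiv:1612.09034 — 5 statements merged into one kernel-verified Lean document; each statement's English description precedes it below -/
import Mathlib

section
/- Let t > 0 and let x ∈ ℝ^n satisfy the line-search condition f(x⁺) ≤ f(x) − t·⟨∇f(x), G_t(x)⟩ + (t/2)·‖G_t(x)‖². Then for every y ∈ ℝ^n, F(y) ≥ F(x⁺) + ⟨G_t(x), y − x⟩ + (t/2)·‖G_t(x)‖² + (α/2)·‖y − x‖². -/
open scoped RealInnerProductSpace
open Set Filter Topology

-- Strong convexity gradient inequality
lemma strong_grad {n : ℕ} {α : ℝ} (hα : 0 ≤ α)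
    (f : EuclideanSpace ℝ (Fin n) → ℝ)
    (hsc : ConvexOn ℝ Set.univ (fun z => f z - α / 2 * ‖z‖ ^ 2))
    (hf : Differentiable ℝ f) (x y : EuclideanSpace ℝ (Fin n)) :
    f x + ⟪gradient f x, y - x⟫ + α / 2 * ‖y - x‖ ^ 2 ≤ f y := by
  set v := y - x with hv
  set g := gradient f x with hg
  -- derivative of s ↦ f (x + s • v) at 0 is ⟪g, v⟫
  have hc : HasDerivAt (fun s : ℝ => x + s • v) v 0 := by
    simpa using ((hasDerivAt_id (0:ℝ)).smul_const v).const_add x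
  have hfd : HasFDerivAt f (InnerProductSpace.toDual ℝ _ g) x :=
    (hf x).hasGradientAt
  have hD : HasDerivAt (fun s : ℝ => f (x + s • v)) ⟪g, v⟫ 0 := by
    have hfd' : HasFDerivAt f (InnerProductSpace.toDual ℝ _ g)
        ((fun s : ℝ => x + s • v) 0) := by simpa using hfd
    have := hfd'.comp_hasDerivAt 0 hc
    simp only [InnerProductSpace.toDual_apply_apply] at this
    exact this
  have hslope : Tendsto (slope (fun s : ℝ => f (x + s • v)) 0) (𝓝[>] 0)
      (𝓝 ⟪g, v⟫) :=
    (hasDerivAt_iff_tendsto_slope.1 hD).mono_left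
      (nhdsWithin_mono _ (fun s hs => ne_of_gt hs))
  set K : ℝ := (f y - α / 2 * ‖y‖ ^ 2) - (f x - α / 2 * ‖x‖ ^ 2) + α * ⟪x, v⟫ with hK
  have hbound : ∀ s ∈ Ioc (0:ℝ) 1,
      slope (fun s : ℝ => f (x + s • v)) 0 s ≤ K + s * (α * ‖v‖ ^ 2 / 2) := by
    intro s hs
    have h1 : (fun z => f z - α / 2 * ‖z‖ ^ 2) ((1 - s) • x + s • y)
        ≤ (1 - s) * (f x - α / 2 * ‖x‖ ^ 2) + s * (f y - α / 2 * ‖y‖ ^ 2) :=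
      hsc.2 (mem_univ x) (mem_univ y) (by linarith [hs.2]) (le_of_lt hs.1) (by ring)
    have he : (1 - s) • x + s • y = x + s • v := by
      rw [hv]; module
    rw [he] at h1
    have hn : ‖x + s • v‖ ^ 2 = ‖x‖ ^ 2 + 2 * (s * ⟪x, v⟫) + s ^ 2 * ‖v‖ ^ 2 := by
      rw [norm_add_sq_real, real_inner_smul_right, norm_smul]
      simp [mul_pow, abs_of_pos hs.1]
    have : f (x + s • v) ≤ f x + s * K + s^2 * (α * ‖v‖ ^ 2 / 2) := by
      simp only at h1
      rw [hn] at h1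
      rw [hK]; nlinarith
    rw [slope_def_field]
    simp only [zero_smul, add_zero, sub_zero]
    rw [div_le_iff₀ hs.1]
    nlinarith [hs.1]
  have hlim2 : Tendsto (fun s : ℝ => K + s * (α * ‖v‖ ^ 2 / 2)) (𝓝[>] 0) (𝓝 K) := by
    have : Tendsto (fun s : ℝ => K + s * (α * ‖v‖ ^ 2 / 2)) (𝓝 0) (𝓝 (K + 0 * (α * ‖v‖ ^ 2 / 2))) := by
      exact (tendsto_id.mul_const _).const_add K
    simpa using this.mono_left nhdsWithin_le_nhds
  have hDK : ⟪g, v⟫ ≤ K := by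
    refine le_of_tendsto_of_tendsto hslope hlim2 ?_
    filter_upwards [Ioc_mem_nhdsGT_of_mem (by norm_num : (0:ℝ) ∈ Ico (0:ℝ) 1)] with s hs
    exact hbound s hs
  have hexp : ‖y - x‖ ^ 2 = ‖y‖ ^ 2 - 2 * ⟪y, x⟫ + ‖x‖ ^ 2 := norm_sub_sq_real y x
  show f x + ⟪g, y - x⟫ + α / 2 * ‖y - x‖ ^ 2 ≤ f y
  rw [hK] at hDK
  simp only [hv, inner_sub_right, real_inner_self_eq_norm_sq,
    real_inner_comm x y] at hDK
  rw [hexp, inner_sub_right]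
  nlinarith [hDK, real_inner_comm x y]

-- Prox optimality gives subgradient inequality
lemma prox_subgrad {n : ℕ} {t : ℝ} (ht : 0 < t)
    (h : EuclideanSpace ℝ (Fin n) → ℝ)
    (hconv : ConvexOn ℝ Set.univ h)
    (u xplus : EuclideanSpace ℝ (Fin n))
    (hprox : IsMinOn (fun z => t * h z + ‖z - u‖ ^ 2 / 2) Set.univ xplus)
    (y : EuclideanSpace ℝ (Fin n)) :
    t * h xplus - ⟪xplus - u, y - xplus⟫ ≤ t * h y := by
  set v := y - xplus with hv
  set w := xplus - u with hw
  set C : ℝ := t * (h y - h xplus) + ⟪w, v⟫ with hC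
  have key : ∀ s ∈ Ioc (0:ℝ) 1, 0 ≤ C + s * (‖v‖ ^ 2 / 2) := by
    intro s hs
    have hmin := hprox (mem_univ ((1 - s) • xplus + s • y))
    simp only [Set.mem_setOf_eq] at hmin
    have h1 : h ((1 - s) • xplus + s • y) ≤ (1 - s) * h xplus + s * h y :=
      hconv.2 (mem_univ xplus) (mem_univ y) (by linarith [hs.2]) (le_of_lt hs.1) (by ring)
    have he : (1 - s) • xplus + s • y - u = w + s • v := by
      rw [hv, hw]; module
    have hn : ‖(1 - s) • xplus + s • y - u‖ ^ 2
        = ‖w‖ ^ 2 + 2 * (s * ⟪w, v⟫) + s ^ 2 * ‖v‖ ^ 2 := by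
      rw [he, norm_add_sq_real, real_inner_smul_right, norm_smul]
      simp [mul_pow, abs_of_pos hs.1]
    rw [hn] at hmin
    have h0 : 0 ≤ s * (C + s * (‖v‖ ^ 2 / 2)) := by
      rw [hC]; nlinarith [hmin, ht]
    exact nonneg_of_mul_nonneg_right h0 hs.1
  have hlim : Tendsto (fun s : ℝ => C + s * (‖v‖ ^ 2 / 2)) (𝓝[>] 0) (𝓝 C) := by
    have : Tendsto (fun s : ℝ => C + s * (‖v‖ ^ 2 / 2)) (𝓝 0)
        (𝓝 (C + 0 * (‖v‖ ^ 2 / 2))) := (tendsto_id.mul_const _).const_add C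
    simpa using this.mono_left nhdsWithin_le_nhds
  have hC0 : 0 ≤ C := by
    refine ge_of_tendsto hlim ?_
    filter_upwards [Ioc_mem_nhdsGT_of_mem (by norm_num : (0:ℝ) ∈ Ico (0:ℝ) 1)] with s hs
    exact key s hs
  rw [hC] at hC0; nlinarith [hC0]

/-- the key lemma under a line-search condition instead of `t ≤ 1/β`.
`f` is `α`-strongly convex and differentiable, `h` is closed convex, `F = f + h`,
`xplus = Prox_{th}(x − t∇f(x))` and `G_t(x) = t⁻¹ • (x - xplus)`. -/
theorem stmt_3 (n : ℕ) (α t : ℝ) (hα : 0 < α) (ht : 0 < t)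
    (f h : EuclideanSpace ℝ (Fin n) → ℝ)
    (hsc : ConvexOn ℝ Set.univ (fun z => f z - α / 2 * ‖z‖ ^ 2))
    (hf : Differentiable ℝ f)
    (hconv : ConvexOn ℝ Set.univ h) (hlsc : LowerSemicontinuous h)
    (x xplus : EuclideanSpace ℝ (Fin n))
    (hprox : IsMinOn (fun z => t * h z + ‖z - (x - t • gradient f x)‖ ^ 2 / 2)
      Set.univ xplus)
    (hline : f xplus ≤ f x - t * ⟪gradient f x, t⁻¹ • (x - xplus)⟫
      + t / 2 * ‖t⁻¹ • (x - xplus)‖ ^ 2) :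
    ∀ y : EuclideanSpace ℝ (Fin n),
      f y + h y ≥ (f xplus + h xplus) + ⟪t⁻¹ • (x - xplus), y - x⟫
        + t / 2 * ‖t⁻¹ • (x - xplus)‖ ^ 2 + α / 2 * ‖y - x‖ ^ 2 := by
  intro y
  set g := gradient f x with hg
  set G := t⁻¹ • (x - xplus) with hG
  have hxG : t • G = x - xplus := smul_inv_smul₀ ht.ne' _
  have hA := strong_grad hα.le f hsc hf x y
  have hB := prox_subgrad ht h hconv (x - t • g) xplus hprox y
  have e1 : xplus - (x - t • g) = t • g - t • G := by rw [hxG]; module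
  have e2 : y - xplus = (y - x) + t • G := by rw [hxG]; module
  have hid : ⟪xplus - (x - t • g), y - xplus⟫
      = t * ⟪g, y - x⟫ + t ^ 2 * ⟪g, G⟫ - t * ⟪G, y - x⟫ - t ^ 2 * ‖G‖ ^ 2 := by
    rw [e1, e2]
    simp only [inner_sub_left, inner_add_right, real_inner_smul_left,
      real_inner_smul_right, real_inner_self_eq_norm_sq, norm_smul,
      Real.norm_eq_abs, mul_pow, sq_abs]
    ring
  rw [hid] at hB
  have hB' : h xplus - ⟪g, y - x⟫ - t * ⟪g, G⟫ + ⟪G, y - x⟫ + t * ‖G‖ ^ 2 ≤ h y := by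
    have h2 : t * (h xplus - ⟪g, y - x⟫ - t * ⟪g, G⟫ + ⟪G, y - x⟫ + t * ‖G‖ ^ 2)
        ≤ t * h y := by nlinarith [hB]
    exact (mul_le_mul_iff_right₀ ht).mp h2
  linarith [hA, hB', hline]
end

section
/- For every x ∈ ℝ^n and every step size t ∈ (0, 1/β], the minimizer x* of F lies in the ball B(x^{++}, (1 − αt)·‖G_t(x)‖²/α² − (2/α)·(F(x⁺) − F*)); that is, ‖x* − x^{++}‖² ≤ (1 − αt)·‖G_t(x)‖²/α² − (2/α)·(F(x⁺) − F*). -/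
open scoped RealInnerProductSpace

section Aux

variable {n : ℕ}

local notation "E" => EuclideanSpace ℝ (Fin n)

/-- Derivative of a function along a line. -/
lemma hasDerivAt_line (f : E → ℝ) (hf : Differentiable ℝ f) (x d : E) (s : ℝ) :
    HasDerivAt (fun r : ℝ => f (r • d + x)) ⟪gradient f (s • d + x), d⟫ s := by
  have hline : HasDerivAt (fun r : ℝ => r • d + x) d s := by
    simpa using ((hasDerivAt_id s).smul_const d).add_const x
  have hg : HasFDerivAt f (InnerProductSpace.toDual ℝ E (gradient f (s • d + x))) (s • d + x) :=
    hasGradientAt_iff_hasFDerivAt.mp (hf (s • d + x)).hasGradientAt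
  simpa [Function.comp_def, InnerProductSpace.toDual_apply_apply] using hg.comp_hasDerivAt s hline

/-- Derivative of the squared norm along a line. -/
lemma hasDerivAt_quad (c : ℝ) (x d : E) (s : ℝ) :
    HasDerivAt (fun r : ℝ => c * ‖r • d + x‖ ^ 2) (2 * c * ⟪x + s • d, d⟫) s := by
  have hfun : ∀ r : ℝ, c * ‖x‖ ^ 2 + 2 * c * ⟪x, d⟫ * r + c * ‖d‖ ^ 2 * r ^ 2
      = c * ‖r • d + x‖ ^ 2 := by
    intro r
    rw [norm_add_sq_real, real_inner_smul_left, real_inner_comm, norm_smul]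
    simp [Real.norm_eq_abs, mul_pow, sq_abs]
    ring
  have hpoly : HasDerivAt (fun r : ℝ => c * ‖x‖ ^ 2 + 2 * c * ⟪x, d⟫ * r + c * ‖d‖ ^ 2 * r ^ 2)
      (2 * c * ⟪x, d⟫ + c * ‖d‖ ^ 2 * (2 * s)) s := by
    have h1 : HasDerivAt (fun r : ℝ => 2 * c * ⟪x, d⟫ * r) (2 * c * ⟪x, d⟫) s := by
      simpa using (hasDerivAt_id s).const_mul (2 * c * ⟪x, d⟫)
    have h2 : HasDerivAt (fun r : ℝ => c * ‖d‖ ^ 2 * r ^ 2) (c * ‖d‖ ^ 2 * (2 * s)) s := by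
      simpa [mul_comm] using (hasDerivAt_pow 2 s).const_mul (c * ‖d‖ ^ 2)
    simpa [Pi.add_def] using ((hasDerivAt_const s (c * ‖x‖ ^ 2)).add h1).add h2
  have hval : 2 * c * ⟪x, d⟫ + c * ‖d‖ ^ 2 * (2 * s) = 2 * c * ⟪x + s • d, d⟫ := by
    rw [inner_add_left, real_inner_smul_left, real_inner_self_eq_norm_sq]
    ring
  rw [← hval]
  simp only [hfun] at hpoly
  exact hpoly

/-- First-order lower bound for a convex function, along a line. -/
lemma conv_line_lower (g : E → ℝ) (hg : ConvexOn ℝ Set.univ g) (x y : E) (m : ℝ)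
    (hd : HasDerivAt (fun s : ℝ => g (s • (y - x) + x)) m 0) : g x + m ≤ g y := by
  have hφ : ConvexOn ℝ Set.univ (fun s : ℝ => g (s • (y - x) + x)) := by
    have h := hg.comp_affineMap (AffineMap.lineMap x y)
    simpa [Function.comp_def, AffineMap.lineMap_apply_module'] using h
  have hs := hφ.le_slope_of_hasDerivAt (Set.mem_univ (0 : ℝ)) (Set.mem_univ 1) one_pos hd
  rw [slope_def_field] at hs
  simp at hs
  linarith

/-- A function with `β`-Lipschitz gradient has `(β/2)‖·‖² - f` convex. -/
lemma smooth_convex (β : ℝ) (hβ : 0 ≤ β) (f : E → ℝ) (hf : Differentiable ℝ f)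
    (hlip : LipschitzWith β.toNNReal (fun z => gradient f z)) :
    ConvexOn ℝ Set.univ (fun z => β / 2 * ‖z‖ ^ 2 - f z) := by
  refine ⟨convex_univ, fun u _ v _ a b ha hb hab => ?_⟩
  set d := v - u with hd
  set φ : ℝ → ℝ := fun s => β / 2 * ‖s • d + u‖ ^ 2 - f (s • d + u) with hφdef
  set φ' : ℝ → ℝ := fun s => β * ⟪u + s • d, d⟫ - ⟪gradient f (s • d + u), d⟫ with hφ'def
  have hder : ∀ s : ℝ, HasDerivAt φ (φ' s) s := by
    intro s
    have := (hasDerivAt_quad (β / 2) u d s).sub (hasDerivAt_line f hf u d s)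
    have heq : 2 * (β / 2) * ⟪u + s • d, d⟫ = β * ⟪u + s • d, d⟫ := by ring
    rw [heq] at this
    exact this
  have hdiff : Differentiable ℝ φ := fun s => (hder s).differentiableAt
  have hderiv : deriv φ = φ' := funext fun s => (hder s).deriv
  have hmono : Monotone φ' := by
    intro s r hsr
    have hkey : ⟪gradient f (r • d + u) - gradient f (s • d + u), (r - s) • d⟫
        ≤ β * ((r - s) * ‖d‖) ^ 2 := by
      have h1 : ‖gradient f (r • d + u) - gradient f (s • d + u)‖ ≤ β * ‖(r - s) • d‖ := by
        have := hlip.dist_le_mul (r • d + u) (s • d + u)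
        simp only [dist_eq_norm] at this
        calc ‖gradient f (r • d + u) - gradient f (s • d + u)‖
            ≤ β.toNNReal * ‖(r • d + u) - (s • d + u)‖ := this
          _ = β * ‖(r - s) • d‖ := by
              rw [Real.coe_toNNReal β hβ]
              congr 2
              module
      calc ⟪gradient f (r • d + u) - gradient f (s • d + u), (r - s) • d⟫
          ≤ ‖gradient f (r • d + u) - gradient f (s • d + u)‖ * ‖(r - s) • d‖ :=
            real_inner_le_norm _ _
        _ ≤ (β * ‖(r - s) • d‖) * ‖(r - s) • d‖ := by
            apply mul_le_mul_of_nonneg_right h1 (norm_nonneg _)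
        _ = β * ((r - s) * ‖d‖) ^ 2 := by
            rw [norm_smul, Real.norm_eq_abs]
            rw [show β * (|r - s| * ‖d‖) * (|r - s| * ‖d‖) = β * (|r - s| ^ 2 * ‖d‖ ^ 2) from by
              ring, sq_abs]
            try ring
    have hexp : ⟪gradient f (r • d + u) - gradient f (s • d + u), (r - s) • d⟫
        = (r - s) * (⟪gradient f (r • d + u), d⟫ - ⟪gradient f (s • d + u), d⟫) := by
      rw [real_inner_smul_right, inner_sub_left]
      try ring
    have hβterm : β * ⟪u + r • d, d⟫ - β * ⟪u + s • d, d⟫ = β * ((r - s) * ‖d‖ ^ 2) := by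
      rw [inner_add_left, inner_add_left, real_inner_smul_left, real_inner_smul_left,
        real_inner_self_eq_norm_sq]
      ring
    simp only [hφ'def]
    rcases eq_or_lt_of_le hsr with h | h
    · rw [h]
    · have hrs : 0 < r - s := by linarith
      have hinner : ⟪gradient f (r • d + u), d⟫ - ⟪gradient f (s • d + u), d⟫
          ≤ β * ((r - s) * ‖d‖ ^ 2) := by
        have := hkey
        rw [hexp] at this
        have h2 : (r - s) * (⟪gradient f (r • d + u), d⟫ - ⟪gradient f (s • d + u), d⟫)
            ≤ (r - s) * (β * ((r - s) * ‖d‖ ^ 2)) := by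
          calc _ ≤ β * ((r - s) * ‖d‖) ^ 2 := this
            _ = (r - s) * (β * ((r - s) * ‖d‖ ^ 2)) := by ring
        exact le_of_mul_le_mul_left h2 hrs
      nlinarith [hβterm]
  have hφconv : ConvexOn ℝ Set.univ φ := by
    apply Monotone.convexOn_univ_of_deriv hdiff
    rw [hderiv]; exact hmono
  have h01 := hφconv.2 (Set.mem_univ (0 : ℝ)) (Set.mem_univ (1 : ℝ)) ha hb hab
  have hpt : (a * 0 + b * 1 : ℝ) • d + u = a • u + b • v := by
    have : (a * 0 + b * 1 : ℝ) = b := by ring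
    rw [this, hd]
    have ha' : a = 1 - b := by linarith
    rw [ha']
    module
  have h0 : φ 0 = β / 2 * ‖u‖ ^ 2 - f u := by simp [hφdef]
  have hdv : (1 : ℝ) • d + u = v := by rw [hd]; module
  have h1 : φ 1 = β / 2 * ‖v‖ ^ 2 - f v := by simp only [hφdef]; rw [hdv]
  simp only [smul_eq_mul] at h01
  rw [show φ (a * 0 + b * 1) = φ (a * 0 + b * 1) from rfl] at h01
  have : φ (a * 0 + b * 1) = β / 2 * ‖a • u + b • v‖ ^ 2 - f (a • u + b • v) := by
    rw [hφdef]; simp only; rw [hpt]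
  rw [this, h0, h1] at h01
  exact h01

end Aux

/-- The ball `B(c, r²) = {y : ‖y − c‖² ≤ r2}`. -/
def B {n : ℕ} (c : EuclideanSpace ℝ (Fin n)) (r2 : ℝ) : Set (EuclideanSpace ℝ (Fin n)) :=
  {y | ‖y - c‖ ^ 2 ≤ r2}

set_option maxHeartbeats 1000000 in
/-- the minimizer `x*` of `F = f + h` lies in the ball
`B(x^{++}, (1 − αt)‖G_t(x)‖²/α² − (2/α)(F(x⁺) − F*))`, where
`xplus = Prox_{th}(x − t∇f(x))`, `G_t(x) = t⁻¹ • (x - xplus)` and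
`x^{++} = x − G_t(x)/α`. -/
theorem stmt_4 (n : ℕ) (α β t : ℝ) (hα : 0 < α) (hαβ : α ≤ β)
    (f h : EuclideanSpace ℝ (Fin n) → ℝ)
    (hsc : ConvexOn ℝ Set.univ (fun z => f z - α / 2 * ‖z‖ ^ 2))
    (hf : Differentiable ℝ f)
    (hlip : LipschitzWith β.toNNReal (fun z => gradient f z))
    (hconv : ConvexOn ℝ Set.univ h) (hlsc : LowerSemicontinuous h)
    (ht : t ∈ Set.Ioc (0 : ℝ) (1 / β))
    (xstar : EuclideanSpace ℝ (Fin n))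
    (hmin : IsMinOn (fun z => f z + h z) Set.univ xstar)
    (x xplus : EuclideanSpace ℝ (Fin n))
    (hprox : IsMinOn (fun z => t * h z + ‖z - (x - t • gradient f x)‖ ^ 2 / 2)
      Set.univ xplus) :
    xstar ∈ B (x - α⁻¹ • (t⁻¹ • (x - xplus)))
      ((1 - α * t) * ‖t⁻¹ • (x - xplus)‖ ^ 2 / α ^ 2
        - 2 / α * ((f xplus + h xplus) - (f xstar + h xstar))) := by
  obtain ⟨ht0, htβ⟩ := ht
  have hβ : 0 < β := lt_of_lt_of_le hα hαβ
  have hβt : β * t ≤ 1 := by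
    rw [div_eq_mul_inv, one_mul] at htβ
    calc β * t ≤ β * β⁻¹ := by apply mul_le_mul_of_nonneg_left htβ hβ.le
      _ = 1 := mul_inv_cancel₀ hβ.ne'
  set g : EuclideanSpace ℝ (Fin n) := gradient f x with hg
  set y : EuclideanSpace ℝ (Fin n) := xstar with hy
  set v : EuclideanSpace ℝ (Fin n) := x - t • g with hv
  -- scalar abbreviations
  set n1 : ℝ := ‖x - xplus‖ ^ 2 with hn1
  set n2 : ℝ := ‖y - x‖ ^ 2 with hn2
  set p : ℝ := ⟪x - xplus, y - x⟫ with hp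
  -- (i) descent lemma
  have hdescent : f xplus ≤ f x + ⟪g, xplus - x⟫ + β / 2 * ‖xplus - x‖ ^ 2 := by
    have hgc := smooth_convex β hβ.le f hf hlip
    have hder : HasDerivAt (fun s : ℝ => β / 2 * ‖s • (xplus - x) + x‖ ^ 2 - f (s • (xplus - x) + x))
        (β * ⟪x, xplus - x⟫ - ⟪g, xplus - x⟫) 0 := by
      have h' := (hasDerivAt_quad (β / 2) x (xplus - x) 0).sub
        (hasDerivAt_line f hf x (xplus - x) 0)
      simp only [zero_smul, add_zero, zero_add] at h'
      have heq : 2 * (β / 2) * ⟪x, xplus - x⟫ - ⟪gradient f x, xplus - x⟫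
          = β * ⟪x, xplus - x⟫ - ⟪g, xplus - x⟫ := by rw [hg]; ring
      rw [heq] at h'
      exact h'
    have := conv_line_lower _ hgc x xplus _ hder
    have hxy2 : ‖xplus‖ ^ 2 = ‖xplus - x‖ ^ 2 + 2 * ⟪x, xplus - x⟫ + ‖x‖ ^ 2 := by
      have := norm_add_sq_real (xplus - x) x
      rw [real_inner_comm] at this
      simpa using this
    nlinarith [this]
  -- (ii) strong convexity lower bound
  have hstrong : f x + ⟪g, y - x⟫ + α / 2 * ‖y - x‖ ^ 2 ≤ f y := by
    have hder : HasDerivAt (fun s : ℝ => f (s • (y - x) + x) - α / 2 * ‖s • (y - x) + x‖ ^ 2)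
        (⟪g, y - x⟫ - α * ⟪x, y - x⟫) 0 := by
      have h' := (hasDerivAt_line f hf x (y - x) 0).sub (hasDerivAt_quad (α / 2) x (y - x) 0)
      simp only [zero_smul, add_zero, zero_add] at h'
      have heq : ⟪gradient f x, y - x⟫ - 2 * (α / 2) * ⟪x, y - x⟫
          = ⟪g, y - x⟫ - α * ⟪x, y - x⟫ := by rw [hg]; ring
      rw [heq] at h'
      exact h'
    have := conv_line_lower _ hsc x y _ hder
    have hxy2 : ‖y‖ ^ 2 = ‖y - x‖ ^ 2 + 2 * ⟪x, y - x⟫ + ‖x‖ ^ 2 := by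
      have := norm_add_sq_real (y - x) x
      rw [real_inner_comm] at this
      simpa using this
    nlinarith [this]
  -- (iii) prox subgradient inequality
  have hproxineq : 0 ≤ t * (h y - h xplus) + ⟪xplus - v, y - xplus⟫ := by
    set d : EuclideanSpace ℝ (Fin n) := y - xplus with hd
    set A : ℝ := t * (h y - h xplus) + ⟪xplus - v, d⟫ with hA
    have hkey : ∀ s : ℝ, s ∈ Set.Ioc (0:ℝ) 1 → 0 ≤ A + s * ‖d‖ ^ 2 / 2 := by
      intro s ⟨hs0, hs1⟩
      have hzval : t * h xplus + ‖xplus - v‖ ^ 2 / 2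
          ≤ t * h (s • d + xplus) + ‖s • d + xplus - v‖ ^ 2 / 2 := by
        have h0 := isMinOn_iff.mp hprox (s • d + xplus) (Set.mem_univ _)
        rw [hv]
        exact h0
      have hhz : h (s • d + xplus) ≤ (1 - s) * h xplus + s * h y := by
        have := hconv.2 (Set.mem_univ xplus) (Set.mem_univ y)
          (by linarith : (0:ℝ) ≤ 1 - s) hs0.le (by ring)
        have hpt : (1 - s) • xplus + s • y = s • d + xplus := by
          rw [hd]; module
        rw [hpt] at this
        simpa using this
      have hnorm : ‖s • d + xplus - v‖ ^ 2
          = ‖xplus - v‖ ^ 2 + 2 * s * ⟪xplus - v, d⟫ + s ^ 2 * ‖d‖ ^ 2 := by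
        have h1 : s • d + xplus - v = (xplus - v) + s • d := by module
        rw [h1, norm_add_sq_real, real_inner_smul_right, norm_smul, Real.norm_eq_abs]
        rw [mul_pow, sq_abs]
        ring
      have hcomb : 0 ≤ t * s * (h y - h xplus) + s * ⟪xplus - v, d⟫ + s ^ 2 * ‖d‖ ^ 2 / 2 := by
        nlinarith [hzval, hhz, hnorm, ht0]
      have hmul : 0 ≤ s * (A + s * ‖d‖ ^ 2 / 2) := by
        rw [hA]; nlinarith [hcomb]
      have hms : s * 0 ≤ s * (A + s * ‖d‖ ^ 2 / 2) := by rw [mul_zero]; exact hmul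
      exact le_of_mul_le_mul_left hms hs0
    by_contra hAneg
    push_neg at hAneg
    rcases eq_or_ne (‖d‖ ^ 2) 0 with hd0 | hd0
    · have := hkey 1 ⟨one_pos, le_refl 1⟩
      rw [hd0] at this
      linarith
    · have hdpos : 0 < ‖d‖ ^ 2 := lt_of_le_of_ne (sq_nonneg _) (Ne.symm hd0)
      set s := min 1 (-A / ‖d‖ ^ 2) with hs
      have hs0 : 0 < s := lt_min one_pos (div_pos (by linarith) hdpos)
      have hs1 : s ≤ 1 := min_le_left _ _
      have h2 := hkey s ⟨hs0, hs1⟩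
      have h3 : s * ‖d‖ ^ 2 ≤ -A := by
        have h4 : s ≤ -A / ‖d‖ ^ 2 := min_le_right _ _
        calc s * ‖d‖ ^ 2 ≤ (-A / ‖d‖ ^ 2) * ‖d‖ ^ 2 := by nlinarith
          _ = -A := div_mul_cancel₀ _ hd0
      linarith
  -- scalar forms
  set q : ℝ := ⟪g, x - xplus⟫ with hq
  set r : ℝ := ⟪g, y - x⟫ with hr
  have hiii : 0 ≤ t * (h y - h xplus) + t * r + t * q - p - n1 := by
    have h1 : xplus - v = t • g - (x - xplus) := by rw [hv]; module
    have h2 : y - xplus = (y - x) + (x - xplus) := by module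
    have hexp : ⟪xplus - v, y - xplus⟫
        = t * ⟪g, y - x⟫ + t * ⟪g, x - xplus⟫ - ⟪x - xplus, y - x⟫ - ‖x - xplus‖ ^ 2 := by
      rw [h1, h2, inner_sub_left, inner_add_right, inner_add_right, real_inner_smul_left,
        real_inner_smul_left, real_inner_self_eq_norm_sq]
      ring
    rw [hr, hq, hp, hn1]
    linarith [hproxineq, hexp]
  have hi : f xplus ≤ f x - q + β / 2 * n1 := by
    have h1 : ⟪g, xplus - x⟫ = -q := by
      rw [hq, ← inner_neg_right]
      congr 1
      module
    have h2 : ‖xplus - x‖ ^ 2 = n1 := by rw [hn1, norm_sub_rev]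
    rw [h1, h2] at hdescent
    linarith
  have hii : f x + r + α / 2 * n2 ≤ f y := hstrong
  -- the fundamental inequality
  have hstar : (f xplus + h xplus) - (f y + h y) + α / 2 * n2 + p / t + n1 / (2 * t) ≤ 0 := by
    have hdiv : 0 ≤ (h y - h xplus) + r + q - p / t - n1 / t := by
      have := div_nonneg hiii ht0.le
      rw [div_eq_mul_inv] at this
      have heq : (t * (h y - h xplus) + t * r + t * q - p - n1) * t⁻¹
          = (h y - h xplus) + r + q - p / t - n1 / t := by
        field_simp
      rw [heq] at this
      exact this
    have hβle : β ≤ 1 / t := by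
      rw [le_div_iff₀ ht0]
      linarith [hβt]
    have hn1nn : 0 ≤ n1 := by rw [hn1]; positivity
    have hle : β / 2 * n1 ≤ (1 / t) / 2 * n1 := by nlinarith
    have h13 : n1 / (2 * t) = 1 / t / 2 * n1 := by ring
    have h14 : n1 / t = 2 * (n1 / (2 * t)) := by ring
    linarith [hi, hii, hdiv, hle, h13, h14]
  -- final assembly
  show ‖xstar - (x - α⁻¹ • (t⁻¹ • (x - xplus)))‖ ^ 2 ≤ _
  have hyP : xstar - (x - α⁻¹ • (t⁻¹ • (x - xplus))) = (y - x) + (α⁻¹ * t⁻¹) • (x - xplus) := by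
    rw [hy]; module
  have hLHS : ‖xstar - (x - α⁻¹ • (t⁻¹ • (x - xplus)))‖ ^ 2
      = n2 + 2 * (α⁻¹ * t⁻¹) * p + (α⁻¹ * t⁻¹) ^ 2 * n1 := by
    rw [hyP, norm_add_sq_real, real_inner_smul_right, norm_smul, Real.norm_eq_abs,
      real_inner_comm, ← hp, ← hn2, mul_pow, sq_abs, ← hn1]
    ring
  have hGnorm : ‖t⁻¹ • (x - xplus)‖ ^ 2 = t⁻¹ ^ 2 * n1 := by
    rw [norm_smul, Real.norm_eq_abs, mul_pow, sq_abs, hn1]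
  rw [hLHS, hGnorm]
  have hΔ : (f xplus + h xplus) - (f xstar + h xstar) = (f xplus + h xplus) - (f y + h y) := by
    rw [hy]
  rw [hΔ]
  set ΔF : ℝ := (f xplus + h xplus) - (f y + h y) with hΔF
  have hident : (1 - α * t) * (t⁻¹ ^ 2 * n1) / α ^ 2 - 2 / α * ΔF
      - (n2 + 2 * (α⁻¹ * t⁻¹) * p + (α⁻¹ * t⁻¹) ^ 2 * n1)
      = (2 / α) * (-(ΔF + α / 2 * n2 + p / t + n1 / (2 * t))) := by
    field_simp
    ring
  have h2α : (0:ℝ) ≤ 2 / α := by positivity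
  have hprod : 0 ≤ (2 / α) * (-(ΔF + α / 2 * n2 + p / t + n1 / (2 * t))) :=
    mul_nonneg h2α (by linarith)
  linarith [hident, hprod]
end

section
/- For every step size t ∈ (0, 1/β], the proximal gradient map G_t is strongly monotone: for all x, y ∈ ℝ^n, ⟨G_t(x) − G_t(y), x − y⟩ ≥ (α/2)·‖x − y‖². -/
open scoped RealInnerProductSpace
open Set

section Aux
variable {E : Type*} [NormedAddCommGroup E] [InnerProductSpace ℝ E]

lemma aux_line_hasDerivAt [CompleteSpace E] (f : E → ℝ) (hf : Differentiable ℝ f) (x d : E)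
    (s : ℝ) : HasDerivAt (fun s : ℝ => f (x + s • d)) ⟪gradient f (x + s • d), d⟫ s := by
  have hc : HasDerivAt (fun s : ℝ => x + s • d) d s := by
    simpa using ((hasDerivAt_id s).smul_const d).const_add x
  have hg : HasFDerivAt f ((InnerProductSpace.toDualMap ℝ E (gradient f (x + s • d))) : E →L[ℝ] ℝ)
      (x + s • d) := hasGradientAt_iff_hasFDerivAt.mp (hf _).hasGradientAt
  exact hg.comp_hasDerivAt s hc

lemma aux_line_convexOn (g : E → ℝ) (hg : ConvexOn ℝ Set.univ g) (x d : E) :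
    ConvexOn ℝ Set.univ (fun s : ℝ => g (x + s • d)) := by
  have h := hg.comp_affineMap (AffineMap.lineMap x (x + d) : ℝ →ᵃ[ℝ] E)
  rw [Set.preimage_univ] at h
  have e : (fun s : ℝ => g (x + s • d)) = g ∘ (AffineMap.lineMap x (x + d) : ℝ →ᵃ[ℝ] E) := by
    ext s
    simp [Function.comp, AffineMap.lineMap_apply, add_comm]
  rw [e]; exact h

lemma aux_grad_ineq [CompleteSpace E] (f : E → ℝ) (hf : Differentiable ℝ f)
    (hc : ConvexOn ℝ Set.univ f) (x y : E) :
    f x + ⟪gradient f x, y - x⟫ ≤ f y := by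
  have hconv := aux_line_convexOn f hc x (y - x)
  have h0 := aux_line_hasDerivAt f hf x (y - x) 0
  have hs := hconv.le_slope_of_hasDerivAt (Set.mem_univ (0:ℝ)) (Set.mem_univ (1:ℝ)) one_pos
    (by simpa using h0)
  simp only [slope_def_field] at hs
  have h1 : x + (1:ℝ) • (y - x) = y := by simp
  have h2 : x + (0:ℝ) • (y - x) = x := by simp
  rw [h1, h2] at hs
  simp at hs
  have e : ⟪gradient f x, y - x⟫ = (fderiv ℝ f x) y - (fderiv ℝ f x) x := by
    simp [inner_sub_right, map_sub]
  linarith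

lemma aux_strong_mono [CompleteSpace E] (f : E → ℝ) (hf : Differentiable ℝ f) {α : ℝ}
    (hsc : ConvexOn ℝ Set.univ (fun z => f z - α / 2 * ‖z‖ ^ 2)) (x y : E) :
    α * ‖x - y‖ ^ 2 ≤ ⟪gradient f x - gradient f y, x - y⟫ := by
  set d := y - x with hd
  have hconv := aux_line_convexOn _ hsc x d
  have hder : ∀ s : ℝ, HasDerivAt (fun s : ℝ => f (x + s • d) - α / 2 * ‖x + s • d‖ ^ 2)
      (⟪gradient f (x + s • d), d⟫ - α * ⟪x + s • d, d⟫) s := by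
    intro s
    have hc : HasDerivAt (fun s : ℝ => x + s • d) d s := by
      simpa using ((hasDerivAt_id s).smul_const d).const_add x
    have hn : HasDerivAt (fun s : ℝ => ‖x + s • d‖ ^ 2)
        (⟪x + s • d, d⟫ + ⟪d, x + s • d⟫) s := by
      have := HasDerivAt.inner ℝ hc hc
      simp_rw [real_inner_self_eq_norm_sq] at this
      exact this
    have := (aux_line_hasDerivAt f hf x d s).sub ((hn.const_mul (α/2)))
    refine this.congr_deriv ?_
    rw [real_inner_comm d (x + s • d)]
    ring
  have hle := hconv.le_slope_of_hasDerivAt (Set.mem_univ (0:ℝ)) (Set.mem_univ (1:ℝ)) one_pos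
    (hder 0)
  have hge := hconv.slope_le_of_hasDerivAt (Set.mem_univ (0:ℝ)) (Set.mem_univ (1:ℝ)) one_pos
    (hder 1)
  have key := hle.trans hge
  have h1 : x + (1:ℝ) • d = y := by rw [hd]; simp
  have h0 : x + (0:ℝ) • d = x := by simp
  rw [h1, h0] at key
  have hyd : ⟪y, d⟫ - ⟪x, d⟫ = ‖d‖ ^ 2 := by
    rw [← inner_sub_left, ← hd, real_inner_self_eq_norm_sq]
  have h5 : α * (⟪y, d⟫ - ⟪x, d⟫) = α * ‖d‖ ^ 2 := by rw [hyd]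
  have : α * ‖d‖ ^ 2 ≤ ⟪gradient f y, d⟫ - ⟪gradient f x, d⟫ := by nlinarith [key, h5]
  have hrw : ⟪gradient f x - gradient f y, x - y⟫ = ⟪gradient f y, d⟫ - ⟪gradient f x, d⟫ := by
    rw [hd]; rw [inner_sub_left]
    rw [show x - y = -(y - x) by abel, inner_neg_right, inner_neg_right]
    ring
  rw [hrw, show ‖x - y‖ = ‖d‖ by rw [hd, norm_sub_rev]]
  exact this

lemma aux_descent [CompleteSpace E] (f : E → ℝ) (hf : Differentiable ℝ f) {β : ℝ} (hβ : 0 ≤ β)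
    (hlip : LipschitzWith β.toNNReal (fun z => gradient f z)) (x y : E) :
    f y ≤ f x + ⟪gradient f x, y - x⟫ + β / 2 * ‖y - x‖ ^ 2 := by
  set d := y - x with hd
  set g : ℝ → ℝ := fun s => f (x + s • d) - s * ⟪gradient f x, d⟫ - β / 2 * s ^ 2 * ‖d‖ ^ 2
    with hg
  have hder : ∀ s : ℝ, HasDerivAt g
      (⟪gradient f (x + s • d), d⟫ - ⟪gradient f x, d⟫ - β * s * ‖d‖ ^ 2) s := by
    intro s
    have h1 := aux_line_hasDerivAt f hf x d s
    have h2 : HasDerivAt (fun s : ℝ => s * ⟪gradient f x, d⟫) ⟪gradient f x, d⟫ s := by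
      simpa using (hasDerivAt_id s).mul_const ⟪gradient f x, d⟫
    have h3 : HasDerivAt (fun s : ℝ => β / 2 * s ^ 2 * ‖d‖ ^ 2) (β * s * ‖d‖ ^ 2) s := by
      have := ((hasDerivAt_pow 2 s).const_mul (β / 2)).mul_const (‖d‖ ^ 2)
      refine this.congr_deriv ?_
      ring
    have := (h1.sub h2).sub h3
    exact this
  have hanti : AntitoneOn g (Set.Icc 0 1) := by
    apply antitoneOn_of_deriv_nonpos (convex_Icc 0 1)
    · exact fun s _ => ((hder s).continuousAt).continuousWithinAt
    · exact fun s _ => ((hder s).differentiableAt).differentiableWithinAt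
    · intro s hs
      rw [interior_Icc] at hs
      rw [(hder s).deriv]
      have hlips : ‖gradient f (x + s • d) - gradient f x‖ ≤ β * (s * ‖d‖) := by
        have := hlip.dist_le_mul (x + s • d) x
        rw [dist_eq_norm, dist_eq_norm, Real.coe_toNNReal β hβ] at this
        simpa [norm_smul, abs_of_nonneg hs.1.le, mul_assoc] using this
      have hinner : ⟪gradient f (x + s • d), d⟫ - ⟪gradient f x, d⟫ ≤ β * s * ‖d‖ ^ 2 := by
        rw [← inner_sub_left]
        calc ⟪gradient f (x + s • d) - gradient f x, d⟫
            ≤ ‖gradient f (x + s • d) - gradient f x‖ * ‖d‖ := real_inner_le_norm _ _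
          _ ≤ β * (s * ‖d‖) * ‖d‖ := by
              apply mul_le_mul_of_nonneg_right hlips (norm_nonneg d)
          _ = β * s * ‖d‖ ^ 2 := by ring
      linarith
  have := hanti (Set.mem_Icc.mpr ⟨le_refl 0, zero_le_one⟩)
    (Set.mem_Icc.mpr ⟨zero_le_one, le_refl 1⟩) zero_le_one
  simp only [hg] at this
  have h1 : x + (1:ℝ) • d = y := by rw [hd]; simp
  have h0 : x + (0:ℝ) • d = x := by simp
  rw [h1, h0] at this
  simp at this
  have e : ⟪gradient f x, d⟫ = (fderiv ℝ f x) d := by simp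
  linarith

lemma aux_coco [CompleteSpace E] (f : E → ℝ) (hf : Differentiable ℝ f) {β : ℝ} (hβ : 0 < β)
    (hlip : LipschitzWith β.toNNReal (fun z => gradient f z))
    (hc : ConvexOn ℝ Set.univ f) (x y : E) :
    β⁻¹ * ‖gradient f x - gradient f y‖ ^ 2 ≤ ⟪gradient f x - gradient f y, x - y⟫ := by
  have key : ∀ a b : E, f b - f a + ⟪gradient f b, a - b⟫
      + (2*β)⁻¹ * ‖gradient f a - gradient f b‖ ^ 2 ≤ 0 := by
    intro a b
    set e := gradient f a - gradient f b with he
    have hd := aux_descent f hf hβ.le hlip a (a - β⁻¹ • e)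
    have hg := aux_grad_ineq f hf hc b (a - β⁻¹ • e)
    have e1 : a - β⁻¹ • e - a = -(β⁻¹ • e) := by abel
    have e2 : ⟪gradient f a, -(β⁻¹ • e)⟫ = -(β⁻¹ * ⟪gradient f a, e⟫) := by
      rw [inner_neg_right, real_inner_smul_right]
    have e3 : ‖-(β⁻¹ • e)‖ ^ 2 = β⁻¹ ^ 2 * ‖e‖ ^ 2 := by
      rw [norm_neg, norm_smul, mul_pow]
      simp [abs_of_nonneg (inv_nonneg.mpr hβ.le)]
    have e4 : ⟪gradient f b, a - β⁻¹ • e - b⟫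
        = ⟪gradient f b, a - b⟫ - β⁻¹ * ⟪gradient f b, e⟫ := by
      rw [show a - β⁻¹ • e - b = (a - b) - β⁻¹ • e by abel, inner_sub_right,
        real_inner_smul_right]
    rw [e1, e2, e3] at hd
    rw [e4] at hg
    have e5 : ⟪gradient f a, e⟫ - ⟪gradient f b, e⟫ = ‖e‖ ^ 2 := by
      rw [← inner_sub_left, ← he, real_inner_self_eq_norm_sq]
    have hββ : β / 2 * (β⁻¹ ^ 2 * ‖e‖ ^ 2) = (2*β)⁻¹ * ‖e‖ ^ 2 := by
      field_simp
    have hb2 : β⁻¹ * ⟪gradient f a, e⟫ - β⁻¹ * ⟪gradient f b, e⟫ = β⁻¹ * ‖e‖^2 := by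
      rw [← mul_sub, e5]
    have hinv : β⁻¹ * ‖e‖^2 - (2*β)⁻¹ * ‖e‖^2 = (2*β)⁻¹ * ‖e‖^2 := by
      field_simp
      ring
    nlinarith [hd, hg, hb2, hinv, hββ]
  have k1 := key x y
  have k2 := key y x
  have hsym : ‖gradient f y - gradient f x‖ = ‖gradient f x - gradient f y‖ := norm_sub_rev _ _
  rw [hsym] at k2
  have hiner : ⟪gradient f y, x - y⟫ + ⟪gradient f x, y - x⟫
      = - ⟪gradient f x - gradient f y, x - y⟫ := by
    rw [inner_sub_left, show y - x = -(x - y) by abel, inner_neg_right]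
    ring
  have hbb : (2*β)⁻¹ * ‖gradient f x - gradient f y‖ ^ 2 + (2*β)⁻¹ * ‖gradient f x - gradient f y‖ ^ 2
      = β⁻¹ * ‖gradient f x - gradient f y‖ ^ 2 := by
    field_simp
    ring
  linarith [k1, k2, hiner, hbb]

lemma aux_norm_combo (p q : E) (a b : ℝ) (hab : a + b = 1) :
    ‖a • p + b • q‖ ^ 2 = a * ‖p‖ ^ 2 + b * ‖q‖ ^ 2 - a * b * ‖p - q‖ ^ 2 := by
  have e1 : ‖a • p + b • q‖ ^ 2 = a * a * ‖p‖ ^ 2 + 2 * (a * b) * ⟪p, q⟫ + b * b * ‖q‖ ^ 2 := by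
    rw [← real_inner_self_eq_norm_sq]
    simp only [inner_add_left, inner_add_right, real_inner_smul_left, real_inner_smul_right,
      real_inner_self_eq_norm_sq, real_inner_comm q p, norm_smul, mul_pow, sq_abs,
      Real.norm_eq_abs]
    ring
  rw [e1, norm_sub_sq_real]
  have : b = 1 - a := by linarith
  subst this
  ring

lemma aux_prox_growth {h : E → ℝ} (hconv : ConvexOn ℝ Set.univ h) {t : ℝ} (ht : 0 < t)
    (P : E → E) (hP : ∀ v, IsMinOn (fun u => t * h u + ‖u - v‖ ^ 2 / 2) Set.univ (P v))
    (v z : E) :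
    t * h (P v) + ‖P v - v‖ ^ 2 / 2 + ‖z - P v‖ ^ 2 / 2 ≤ t * h z + ‖z - v‖ ^ 2 / 2 := by
  have hstep : ∀ lam : ℝ, 0 < lam → lam ≤ 1 →
      t * h (P v) + ‖P v - v‖ ^ 2 / 2 + ‖z - P v‖ ^ 2 / 2
        ≤ t * h z + ‖z - v‖ ^ 2 / 2 + lam * (‖z - P v‖ ^ 2 / 2) := by
    intro lam h0 h1
    have hmin := isMinOn_iff.mp (hP v) ((1 - lam) • P v + lam • z) (Set.mem_univ _)
    have hcomb := hconv.2 (Set.mem_univ (P v)) (Set.mem_univ z) (by linarith : (0:ℝ) ≤ 1 - lam)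
      h0.le (by ring)
    have hnorm : ‖(1 - lam) • P v + lam • z - v‖ ^ 2
        = (1 - lam) * ‖P v - v‖ ^ 2 + lam * ‖z - v‖ ^ 2 - (1 - lam) * lam * ‖z - P v‖ ^ 2 := by
      have hv : (1 - lam) • P v + lam • z - v = (1 - lam) • (P v - v) + lam • (z - v) := by
        rw [smul_sub, smul_sub, sub_smul, sub_smul, one_smul, one_smul]
        abel
      rw [hv, aux_norm_combo (P v - v) (z - v) (1 - lam) lam (by ring),
        show P v - v - (z - v) = -(z - P v) by abel, norm_neg]
    rw [hnorm] at hmin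
    have hh : t * h ((1 - lam) • P v + lam • z)
        ≤ (1 - lam) * (t * h (P v)) + lam * (t * h z) := by
      have := mul_le_mul_of_nonneg_left hcomb ht.le
      simp only [smul_eq_mul] at this ⊢
      nlinarith [this]
    nlinarith [hmin, hh, mul_pos h0 h0]
  refine le_of_forall_pos_le_add ?_
  intro ε hε
  set c := ‖z - P v‖ ^ 2 / 2 with hcdef
  have hc0 : 0 ≤ c := by positivity
  have hl0 : 0 < min 1 (ε / (c + 1)) := lt_min one_pos (by positivity)
  have hl1 : min 1 (ε / (c + 1)) ≤ 1 := min_le_left _ _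
  have hkey := hstep _ hl0 hl1
  have hlc : min 1 (ε / (c + 1)) * c ≤ ε := by
    have h2 : min 1 (ε / (c + 1)) ≤ ε / (c + 1) := min_le_right _ _
    have h3 : ε / (c + 1) * c ≤ ε := by
      rw [div_mul_eq_mul_div, div_le_iff₀ (by linarith)]
      nlinarith
    nlinarith [mul_le_mul_of_nonneg_right h2 hc0]
  linarith

lemma aux_prox_firm {h : E → ℝ} (hconv : ConvexOn ℝ Set.univ h) {t : ℝ} (ht : 0 < t)
    (P : E → E) (hP : ∀ v, IsMinOn (fun u => t * h u + ‖u - v‖ ^ 2 / 2) Set.univ (P v))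
    (u v : E) : ‖P u - P v‖ ^ 2 ≤ ⟪P u - P v, u - v⟫ := by
  have h1 := aux_prox_growth hconv ht P hP u (P v)
  have h2 := aux_prox_growth hconv ht P hP v (P u)
  have hiden : ∀ a b p q : E, ‖b - p‖ ^ 2 + ‖a - q‖ ^ 2 - ‖a - p‖ ^ 2 - ‖b - q‖ ^ 2
      = 2 * ⟪a - b, p - q⟫ := by
    intro a b p q
    simp only [norm_sub_sq_real, inner_sub_left, inner_sub_right]
    ring
  have key := hiden (P u) (P v) u v
  have e1 : ‖P v - P u‖ ^ 2 = ‖P u - P v‖ ^ 2 := by rw [norm_sub_rev]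
  linarith [h1, h2, key, e1]

end Aux

set_option maxHeartbeats 1000000 in
/-- strong monotonicity of the proximal gradient map `G_t`, where
`G_t(z) = (z − z⁺)/t`, `z⁺ = P (z − t∇f(z))` and `P v = Prox_{th}(v)` is the
minimizer of `u ↦ t·h(u) + ½‖u − v‖²`. -/
theorem stmt_8 (n : ℕ) (α β t : ℝ) (hα : 0 < α) (hαβ : α ≤ β)
    (f h : EuclideanSpace ℝ (Fin n) → ℝ)
    (hsc : ConvexOn ℝ Set.univ (fun z => f z - α / 2 * ‖z‖ ^ 2))
    (hf : Differentiable ℝ f)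
    (hlip : LipschitzWith β.toNNReal (fun z => gradient f z))
    (hconv : ConvexOn ℝ Set.univ h) (hlsc : LowerSemicontinuous h)
    (ht : t ∈ Set.Ioc (0 : ℝ) (1 / β))
    (P : EuclideanSpace ℝ (Fin n) → EuclideanSpace ℝ (Fin n))
    (hP : ∀ v, IsMinOn (fun u => t * h u + ‖u - v‖ ^ 2 / 2) Set.univ (P v)) :
    ∀ x y : EuclideanSpace ℝ (Fin n),
      ⟪t⁻¹ • (x - P (x - t • gradient f x)) - t⁻¹ • (y - P (y - t • gradient f y)), x - y⟫
        ≥ α / 2 * ‖x - y‖ ^ 2 := by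
  obtain ⟨ht0, ht1⟩ := ht
  have hβ : 0 < β := hα.trans_le hαβ
  have htβ : t * β ≤ 1 := by
    rw [div_eq_mul_inv, one_mul] at ht1
    calc t * β ≤ β⁻¹ * β := by apply mul_le_mul_of_nonneg_right ht1 hβ.le
      _ = 1 := inv_mul_cancel₀ hβ.ne'
  have htα : t * α ≤ 1 := le_trans (by nlinarith) htβ
  intro x y
  set d := x - y with hdd
  set e := gradient f x - gradient f y with hee
  set u := x - t • gradient f x with hu
  set v := y - t • gradient f y with hv
  -- f is convex
  have h2c : ConvexOn ℝ Set.univ (fun z : EuclideanSpace ℝ (Fin n) => α / 2 * ‖z‖ ^ 2) := by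
    refine ⟨convex_univ, fun p _ q _ a b ha hb hab => ?_⟩
    simp only [smul_eq_mul]
    rw [aux_norm_combo p q a b hab]
    nlinarith [mul_nonneg (mul_nonneg (mul_nonneg hα.le ha) hb) (sq_nonneg ‖p - q‖)]
  have hfc : ConvexOn ℝ Set.univ f := by
    have hfeq : (fun z : EuclideanSpace ℝ (Fin n) => f z - α / 2 * ‖z‖ ^ 2)
        + (fun z : EuclideanSpace ℝ (Fin n) => α / 2 * ‖z‖ ^ 2) = f := by
      funext z; simp
    exact hfeq ▸ (hsc.add h2c)
  -- strong monotonicity of gradient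
  have h1 : α * ‖d‖ ^ 2 ≤ ⟪e, d⟫ := aux_strong_mono f hf hsc x y
  -- co-coercivity
  have h2 : β⁻¹ * ‖e‖ ^ 2 ≤ ⟪e, d⟫ := aux_coco f hf hβ hlip hfc x y
  -- nonexpansiveness
  have hfirm := aux_prox_firm hconv ht0 P hP u v
  have hne : ‖P u - P v‖ ≤ ‖u - v‖ := by
    have hcs := real_inner_le_norm (P u - P v) (u - v)
    nlinarith [norm_nonneg (P u - P v), norm_nonneg (u - v)]
  -- u - v = d - t • e
  have huv : u - v = d - t • e := by
    rw [hu, hv, hdd, hee, smul_sub]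
    abel
  have hsq : ‖u - v‖ ^ 2 = ‖d‖ ^ 2 - 2 * t * ⟪e, d⟫ + t ^ 2 * ‖e‖ ^ 2 := by
    rw [huv, norm_sub_sq_real, real_inner_smul_right, real_inner_comm d e, norm_smul, mul_pow,
      Real.norm_eq_abs, sq_abs]
    ring
  -- key bound
  have hA : 2 * t * (1 - t * β / 2) * (α * ‖d‖ ^ 2) ≤ 2 * t * (1 - t * β / 2) * ⟪e, d⟫ :=
    mul_le_mul_of_nonneg_left h1 (by nlinarith)
  have hB : t ^ 2 * ‖e‖ ^ 2 ≤ 2 * t * (t * β / 2) * ⟪e, d⟫ := by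
    have := mul_le_mul_of_nonneg_left h2 (by positivity : (0:ℝ) ≤ 2 * t * (t * β / 2))
    calc t ^ 2 * ‖e‖ ^ 2 = 2 * t * (t * β / 2) * (β⁻¹ * ‖e‖ ^ 2) := by
          field_simp
      _ ≤ 2 * t * (t * β / 2) * ⟪e, d⟫ := this
  have key : ‖u - v‖ ^ 2 ≤ ((1 - t * α / 2) * ‖d‖) ^ 2 := by
    rw [hsq]
    nlinarith [hA, hB, mul_nonneg (mul_nonneg (mul_nonneg ht0.le hα.le)
      (by linarith : (0:ℝ) ≤ 1 - t * β)) (sq_nonneg ‖d‖), sq_nonneg (t * α * ‖d‖),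
      mul_nonneg (mul_nonneg (mul_nonneg (mul_nonneg ht0.le ht0.le) hα.le) hα.le) (sq_nonneg ‖d‖)]
  have hnorm : ‖u - v‖ ≤ (1 - t * α / 2) * ‖d‖ := by
    apply le_of_pow_le_pow_left₀ two_ne_zero (by nlinarith [norm_nonneg d]) key
  -- final chain
  have hvec : t⁻¹ • (x - P u) - t⁻¹ • (y - P v) = t⁻¹ • (d - (P u - P v)) := by
    rw [← smul_sub, hdd]
    congr 1
    abel
  rw [hvec, real_inner_smul_left, inner_sub_left, real_inner_self_eq_norm_sq]
  have hpd : ⟪P u - P v, d⟫ ≤ (1 - t * α / 2) * ‖d‖ ^ 2 := by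
    calc ⟪P u - P v, d⟫ ≤ ‖P u - P v‖ * ‖d‖ := real_inner_le_norm _ _
      _ ≤ ((1 - t * α / 2) * ‖d‖) * ‖d‖ := by
          apply mul_le_mul_of_nonneg_right (hne.trans hnorm) (norm_nonneg d)
      _ = (1 - t * α / 2) * ‖d‖ ^ 2 := by ring
  have ht' : (0:ℝ) < t⁻¹ := inv_pos.mpr ht0
  have : t⁻¹ * (‖d‖ ^ 2 - ⟪P u - P v, d⟫) ≥ t⁻¹ * (t * α / 2 * ‖d‖ ^ 2) := by
    apply mul_le_mul_of_nonneg_left _ ht'.le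
    nlinarith [hpd]
  calc t⁻¹ * (‖d‖ ^ 2 - ⟪P u - P v, d⟫) ≥ t⁻¹ * (t * α / 2 * ‖d‖ ^ 2) := this
    _ = α / 2 * ‖d‖ ^ 2 := by
        field_simp
end

section
/- Fix t ∈ (0, 1/β] and x, c ∈ ℝ^n with x ≠ c. If φ̄_{t,x,c}(0) < 0, then there exists a unique s ∈ (0, ∞) such that φ̄_{t,x,c}(s) = 0. -/
open scoped RealInnerProductSpace
open Set

variable {E : Type*} [NormedAddCommGroup E] [InnerProductSpace ℝ E]

/-- λ-trick: if `0 ≤ l*A + l²*B` for all small positive `l`, then `0 ≤ A`. -/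
lemma aux_lam_trick {A B : ℝ} (hB : 0 ≤ B)
    (hA : ∀ l : ℝ, l ∈ Set.Ioc (0:ℝ) 1 → 0 ≤ l * A + l ^ 2 * B) : 0 ≤ A := by
  by_contra hA'
  push_neg at hA'
  set l : ℝ := min 1 ((-A) / (2 * (B + 1))) with hl
  have hl0 : 0 < l := lt_min one_pos (div_pos (by linarith) (by linarith))
  have hl1 : l ≤ 1 := min_le_left _ _
  have hl2 : l ≤ (-A) / (2 * (B + 1)) := min_le_right _ _
  have := hA l ⟨hl0, hl1⟩
  have hB1 : (0:ℝ) < 2 * (B + 1) := by linarith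
  have h2 : l * (2 * (B + 1)) ≤ -A := by
    rw [← le_div_iff₀ hB1]; exact hl2
  nlinarith [sq_nonneg l, mul_pos hl0 hl0]

/-- Directional convexity: restriction of a convex function to a line is convex. -/
lemma aux_line_convex {g : E → ℝ} (hc : ConvexOn ℝ Set.univ g) (x d : E) :
    ConvexOn ℝ Set.univ (fun σ : ℝ => g (x + σ • d)) := by
  refine ⟨convex_univ, fun a _ b _ la mu hla hmu hs => ?_⟩
  have h2 := hc.2 (Set.mem_univ (x + a • d)) (Set.mem_univ (x + b • d)) hla hmu hs
  have he : la • (x + a • d) + mu • (x + b • d) = (la + mu) • x + (la * a + mu * b) • d := by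
    module
  rw [he, hs, one_smul] at h2
  simpa using h2

/-- Gradient inequality for convex functions, via directional derivatives. -/
lemma aux_grad_ineq_s10 {g : E → ℝ} {g' : E → E}
    (hdir : ∀ (x d : E) (τ : ℝ), HasDerivAt (fun σ => g (x + σ • d)) ⟪g' (x + τ • d), d⟫ τ)
    (hc : ConvexOn ℝ Set.univ g) (x y : E) :
    g x + ⟪g' x, y - x⟫ ≤ g y := by
  set d := y - x with hd
  have hq := aux_line_convex hc x d
  have h0 : HasDerivAt (fun σ : ℝ => g (x + σ • d)) ⟪g' x, d⟫ 0 := by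
    simpa using hdir x d 0
  have hslope := hq.le_slope_of_hasDerivAt (Set.mem_univ 0) (Set.mem_univ (1:ℝ)) one_pos h0
  have hsl : slope (fun σ : ℝ => g (x + σ • d)) 0 1 = g y - g x := by
    simp [slope_def_field, hd]
  rw [hsl] at hslope
  linarith

/-- Monotonicity of the gradient map implies convexity. -/
lemma aux_convex_of_mono {g : E → ℝ} {g' : E → E}
    (hdir : ∀ (x d : E) (τ : ℝ), HasDerivAt (fun σ => g (x + σ • d)) ⟪g' (x + τ • d), d⟫ τ)
    (hm : ∀ x y : E, 0 ≤ ⟪g' y - g' x, y - x⟫) :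
    ConvexOn ℝ Set.univ g := by
  refine ⟨convex_univ, fun a _ b _ la mu hla hmu hs => ?_⟩
  set d := b - a with hd
  set q : ℝ → ℝ := fun σ => g (a + σ • d) with hqdef
  have hdq : ∀ τ : ℝ, HasDerivAt q ⟪g' (a + τ • d), d⟫ τ := fun τ => hdir a d τ
  have hdiff : Differentiable ℝ q := fun τ => (hdq τ).differentiableAt
  have hderiv : ∀ τ : ℝ, deriv q τ = ⟪g' (a + τ • d), d⟫ := fun τ => (hdq τ).deriv
  have hmono : Monotone (deriv q) := by
    intro σ₁ σ₂ h12
    rw [hderiv, hderiv]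
    rcases eq_or_lt_of_le h12 with rfl | hlt
    · exact le_rfl
    have := hm (a + σ₁ • d) (a + σ₂ • d)
    have he : (a + σ₂ • d) - (a + σ₁ • d) = (σ₂ - σ₁) • d := by module
    rw [he, real_inner_smul_right] at this
    have h3 : 0 ≤ ⟪g' (a + σ₂ • d) - g' (a + σ₁ • d), d⟫ :=
      nonneg_of_mul_nonneg_right this (by linarith)
    rw [inner_sub_left] at h3
    linarith
  have hqc : ConvexOn ℝ Set.univ q := hmono.convexOn_univ_of_deriv hdiff
  have h2 := hqc.2 (Set.mem_univ (0:ℝ)) (Set.mem_univ (1:ℝ)) hla hmu hs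
  simp only [smul_eq_mul, mul_zero, mul_one, zero_add, hqdef] at h2
  have he1 : a + mu • d = la • a + mu • b := by
    rw [hd]; rw [show la = 1 - mu by linarith]; module
  have he0 : a + (0:ℝ) • d = a := by simp
  have he2 : a + (1:ℝ) • d = b := by simp [hd]
  rw [he1, he0, he2] at h2
  simpa using h2

/-- Variational inequality for the prox operator. -/
lemma aux_prox_var {t : ℝ} (ht : 0 < t) {h : E → ℝ} (hconv : ConvexOn ℝ Set.univ h)
    {P : E → E} (hP : ∀ v, IsMinOn (fun u => t * h u + ‖u - v‖ ^ 2 / 2) Set.univ (P v))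
    (v w : E) : ⟪v - P v, w - P v⟫ ≤ t * h w - t * h (P v) := by
  set u := P v with hu
  have key : 0 ≤ (t * h w - t * h u) + ⟪u - v, w - u⟫ := by
    refine aux_lam_trick (B := ‖w - u‖ ^ 2 / 2) (by positivity) (fun l hl => ?_)
    have hmin := (hP v) (Set.mem_univ (u + l • (w - u)))
    simp only [Set.mem_setOf_eq, ← hu] at hmin
    have hcv := hconv.2 (Set.mem_univ u) (Set.mem_univ w) (by linarith [hl.2] : (0:ℝ) ≤ 1 - l)
      (le_of_lt hl.1) (by ring)
    have he : (1 - l) • u + l • w = u + l • (w - u) := by module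
    rw [he] at hcv
    have hnorm : ‖u + l • (w - u) - v‖ ^ 2
        = ‖u - v‖ ^ 2 + 2 * (l * ⟪u - v, w - u⟫) + l ^ 2 * ‖w - u‖ ^ 2 := by
      have : u + l • (w - u) - v = (u - v) + l • (w - u) := by module
      rw [this, norm_add_sq_real, real_inner_smul_right, norm_smul]
      simp [mul_pow, Real.norm_eq_abs, sq_abs]
    have hh : t * h (u + l • (w - u)) ≤ (1 - l) * (t * h u) + l * (t * h w) := by
      have := mul_le_mul_of_nonneg_left hcv (le_of_lt ht)
      simp only [smul_eq_mul] at this ⊢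
      nlinarith
    rw [hnorm] at hmin
    nlinarith
  have : ⟪v - u, w - u⟫ = -⟪u - v, w - u⟫ := by
    rw [← inner_neg_left]; congr 1; module
  rw [this]; linarith

lemma aux_inner_id (a b c d : E) :
    ⟪a - c, d - c⟫ + ⟪b - d, c - d⟫ = ⟪b - a, c - d⟫ + ‖c - d‖ ^ 2 := by
  rw [norm_sub_sq_real]
  simp only [inner_sub_left, inner_sub_right, real_inner_self_eq_norm_sq]
  linear_combination real_inner_comm d c

/-- The prox operator is nonexpansive. -/
lemma aux_prox_nonexp {t : ℝ} (ht : 0 < t) {h : E → ℝ} (hconv : ConvexOn ℝ Set.univ h)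
    {P : E → E} (hP : ∀ v, IsMinOn (fun u => t * h u + ‖u - v‖ ^ 2 / 2) Set.univ (P v))
    (v₁ v₂ : E) : ‖P v₁ - P v₂‖ ≤ ‖v₁ - v₂‖ := by
  set u₁ := P v₁; set u₂ := P v₂
  have h1 := aux_prox_var ht hconv hP v₁ u₂
  have h2 := aux_prox_var ht hconv hP v₂ u₁
  have e1 := aux_inner_id v₁ v₂ u₁ u₂
  have hfirm : ‖u₁ - u₂‖ ^ 2 ≤ ⟪v₁ - v₂, u₁ - u₂⟫ := by
    have e2 : ⟪v₂ - v₁, u₁ - u₂⟫ = -⟪v₁ - v₂, u₁ - u₂⟫ := by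
      rw [← inner_neg_left]; congr 1; module
    rw [e2] at e1
    nlinarith [h1, h2]
  have hcs := real_inner_le_norm (v₁ - v₂) (u₁ - u₂)
  rcases eq_or_lt_of_le (norm_nonneg (u₁ - u₂)) with h0 | h0
  · rw [← h0]; exact norm_nonneg _
  · nlinarith

/-- Directional derivative of `σ ↦ κ/2 * ‖x + σ • d‖²`. -/
lemma aux_dir_sq (κ : ℝ) (x d : E) (τ : ℝ) :
    HasDerivAt (fun σ : ℝ => κ / 2 * ‖x + σ • d‖ ^ 2) ⟪κ • (x + τ • d), d⟫ τ := by
  have he : (fun σ : ℝ => κ / 2 * ‖x + σ • d‖ ^ 2)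
      = fun σ : ℝ => κ / 2 * (‖x‖ ^ 2 + 2 * (σ * ⟪x, d⟫) + σ ^ 2 * ‖d‖ ^ 2) := by
    funext σ
    rw [norm_add_sq_real, real_inner_smul_right, norm_smul]
    simp [mul_pow, Real.norm_eq_abs, sq_abs]
  rw [he]
  have hp : HasDerivAt (fun σ : ℝ => κ / 2 * (‖x‖ ^ 2 + 2 * (σ * ⟪x, d⟫) + σ ^ 2 * ‖d‖ ^ 2))
      (κ / 2 * (2 * ⟪x, d⟫ + 2 * τ * ‖d‖ ^ 2)) τ := by
    have h1 : HasDerivAt (fun σ : ℝ => σ) 1 τ := hasDerivAt_id τ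
    have h2 : HasDerivAt (fun σ : ℝ => σ ^ 2) (2 * τ) τ := by
      simpa using (hasDerivAt_pow 2 τ)
    have := (((h1.const_mul (2 * ⟪x, d⟫)).const_add (‖x‖ ^ 2)).add
      (h2.mul_const (‖d‖ ^ 2))).const_mul (κ / 2)
    have e : (fun σ : ℝ => κ / 2 * (‖x‖ ^ 2 + 2 * (σ * ⟪x, d⟫) + σ ^ 2 * ‖d‖ ^ 2))
        = (fun y => κ / 2 * (((fun x_1 : ℝ => ‖x‖ ^ 2 + 2 * ⟪x, d⟫ * x_1) + fun y : ℝ => y ^ 2 * ‖d‖ ^ 2) : ℝ → ℝ) y) := by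
      funext σ; simp only [Pi.add_apply]; ring
    rw [e]; exact this.congr_deriv (by ring : κ / 2 * (2 * ⟪x, d⟫ * 1 + 2 * τ * ‖d‖ ^ 2) = κ / 2 * (2 * ⟪x, d⟫ + 2 * τ * ‖d‖ ^ 2))
  convert hp using 1
  rw [real_inner_smul_left, inner_add_left, real_inner_smul_left, real_inner_self_eq_norm_sq]
  ring

set_option maxHeartbeats 2000000

/-- if `φ̄_{t,x,c}(0) < 0` then `φ̄_{t,x,c}` has a unique root in
`(0, ∞)`, where `φ̄_{t,x,c}(s) = ⟨z⁺ − z, x − c⟩` at `z = x + s(c − x)`,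
`z⁺ = P (z − t∇f(z))` and `P v = Prox_{th}(v)`. -/
theorem stmt_10 (n : ℕ) (α β t : ℝ) (hα : 0 < α) (hαβ : α ≤ β)
    (f h : EuclideanSpace ℝ (Fin n) → ℝ)
    (hsc : ConvexOn ℝ Set.univ (fun z => f z - α / 2 * ‖z‖ ^ 2))
    (hf : Differentiable ℝ f)
    (hlip : LipschitzWith β.toNNReal (fun z => gradient f z))
    (hconv : ConvexOn ℝ Set.univ h) (hlsc : LowerSemicontinuous h)
    (ht : t ∈ Set.Ioc (0 : ℝ) (1 / β))
    (P : EuclideanSpace ℝ (Fin n) → EuclideanSpace ℝ (Fin n))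
    (hP : ∀ v, IsMinOn (fun u => t * h u + ‖u - v‖ ^ 2 / 2) Set.univ (P v))
    (x c : EuclideanSpace ℝ (Fin n)) (hxc : x ≠ c)
    (φbar : ℝ → ℝ)
    (hφbar : ∀ s : ℝ,
      φbar s = ⟪P ((x + s • (c - x)) - t • gradient f (x + s • (c - x))) - (x + s • (c - x)),
        x - c⟫)
    (h0 : φbar 0 < 0) :
    ∃! s : ℝ, 0 < s ∧ φbar s = 0 := by
  have hβ : 0 < β := lt_of_lt_of_le hα hαβ
  obtain ⟨ht0, htβ⟩ := ht
  -- directional derivative of f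
  have dir_f : ∀ (x' d : EuclideanSpace ℝ (Fin n)) (τ : ℝ),
      HasDerivAt (fun σ => f (x' + σ • d)) ⟪gradient f (x' + τ • d), d⟫ τ := by
    intro x' d τ
    have hF : HasFDerivAt f
        (InnerProductSpace.toDual ℝ (EuclideanSpace ℝ (Fin n)) (gradient f (x' + τ • d))) (x' + τ • d) :=
      hasGradientAt_iff_hasFDerivAt.mp (hf _).hasGradientAt
    have hcu : HasDerivAt (fun σ : ℝ => x' + σ • d) d τ := by
      simpa using ((hasDerivAt_id τ).smul_const d).const_add x'
    have := hF.comp_hasDerivAt τ hcu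
    simpa [InnerProductSpace.toDual_apply_apply, Function.comp_def] using this
  -- convexity of f
  have hconvf : ConvexOn ℝ Set.univ f := by
    have hsq : ConvexOn ℝ Set.univ (fun z : EuclideanSpace ℝ (Fin n) => α / 2 * ‖z‖ ^ 2) := by
      refine aux_convex_of_mono (g' := fun z => α • z) (fun x' d τ => aux_dir_sq α x' d τ) ?_
      intro a b
      rw [show α • b - α • a = α • (b - a) by module, real_inner_smul_left]
      exact mul_nonneg hα.le real_inner_self_nonneg
    have h2 := hsc.add hsq
    have he : ((fun z => f z - α / 2 * ‖z‖ ^ 2) + fun z : EuclideanSpace ℝ (Fin n) => α / 2 * ‖z‖ ^ 2) = f := by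
      funext z; simp
    rwa [he] at h2
  have hA : ∀ a b : EuclideanSpace ℝ (Fin n), f a + ⟪gradient f a, b - a⟫ ≤ f b := aux_grad_ineq_s10 dir_f hconvf
  -- Lipschitz bound
  have hlipβ : ∀ a b : EuclideanSpace ℝ (Fin n), ‖gradient f b - gradient f a‖ ≤ β * ‖b - a‖ := by
    intro a b
    have := hlip.dist_le_mul b a
    rw [dist_eq_norm, dist_eq_norm] at this
    simpa [Real.coe_toNNReal β hβ.le] using this
  -- descent lemma
  have hD : ∀ a b : EuclideanSpace ℝ (Fin n), f b ≤ f a + ⟪gradient f a, b - a⟫ + β / 2 * ‖b - a‖ ^ 2 := by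
    have dir_g : ∀ (x' d : EuclideanSpace ℝ (Fin n)) (τ : ℝ),
        HasDerivAt (fun σ => β / 2 * ‖x' + σ • d‖ ^ 2 - f (x' + σ • d))
          ⟪β • (x' + τ • d) - gradient f (x' + τ • d), d⟫ τ := by
      intro x' d τ
      have := (aux_dir_sq β x' d τ).sub (dir_f x' d τ)
      rwa [← inner_sub_left] at this
    have mono_g : ∀ a b : EuclideanSpace ℝ (Fin n), 0 ≤ ⟪(β • b - gradient f b) - (β • a - gradient f a), b - a⟫ := by
      intro a b
      have he : (β • b - gradient f b) - (β • a - gradient f a)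
          = β • (b - a) - (gradient f b - gradient f a) := by module
      rw [he, inner_sub_left, real_inner_smul_left, real_inner_self_eq_norm_sq]
      have h1 := real_inner_le_norm (gradient f b - gradient f a) (b - a)
      have h2 := hlipβ a b
      nlinarith [norm_nonneg (b - a)]
    have hgconv : ConvexOn ℝ Set.univ (fun z : EuclideanSpace ℝ (Fin n) => β / 2 * ‖z‖ ^ 2 - f z) :=
      aux_convex_of_mono (g' := fun z => β • z - gradient f z) dir_g mono_g
    intro a b
    have := aux_grad_ineq_s10 (g' := fun z => β • z - gradient f z) dir_g hgconv a b
    simp only [inner_sub_left, real_inner_smul_left] at this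
    have he : ‖b‖ ^ 2 = ‖a‖ ^ 2 + 2 * ⟪a, b - a⟫ + ‖b - a‖ ^ 2 := by
      have := norm_add_sq_real a (b - a)
      simpa using this
    nlinarith
  -- half-cocoercivity
  have hK : ∀ a b : EuclideanSpace ℝ (Fin n), f a + ⟪gradient f a, b - a⟫
      + 1 / (2 * β) * ‖gradient f b - gradient f a‖ ^ 2 ≤ f b := by
    intro a b
    set Δ : EuclideanSpace ℝ (Fin n) := gradient f b - gradient f a with hΔ
    have hA' := hA a (b - β⁻¹ • Δ)
    have hD' := hD b (b - β⁻¹ • Δ)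
    rw [show (b - β⁻¹ • Δ) - a = (b - a) - β⁻¹ • Δ by module] at hA'
    rw [show (b - β⁻¹ • Δ) - b = -(β⁻¹ • Δ) by module] at hD'
    rw [inner_sub_right, real_inner_smul_right] at hA'
    rw [inner_neg_right, real_inner_smul_right, norm_neg, norm_smul] at hD'
    have e3 : ⟪gradient f b, Δ⟫ - ⟪gradient f a, Δ⟫ = ‖Δ‖ ^ 2 := by
      rw [← inner_sub_left, ← hΔ, real_inner_self_eq_norm_sq]
    have hββ : β * β⁻¹ = 1 := mul_inv_cancel₀ hβ.ne'
    have habs : ‖β⁻¹‖ = β⁻¹ := by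
      rw [Real.norm_eq_abs, abs_of_pos (by positivity)]
    rw [habs] at hD'
    have hc2 : β / 2 * (β⁻¹ * ‖Δ‖) ^ 2 = 1 / (2 * β) * ‖Δ‖ ^ 2 := by
      field_simp
    rw [hc2] at hD'
    have hc3 : β⁻¹ * ‖Δ‖ ^ 2 - 1 / (2 * β) * ‖Δ‖ ^ 2 = 1 / (2 * β) * ‖Δ‖ ^ 2 := by
      field_simp; ring
    have hc1 : β⁻¹ * ⟪gradient f b, Δ⟫ - β⁻¹ * ⟪gradient f a, Δ⟫ = β⁻¹ * ‖Δ‖ ^ 2 := by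
      rw [← mul_sub, e3]
    linarith
  -- cocoercivity with constant t
  have coco : ∀ a b : EuclideanSpace ℝ (Fin n), t * ‖gradient f b - gradient f a‖ ^ 2
      ≤ ⟪gradient f b - gradient f a, b - a⟫ := by
    intro a b
    have h1 := hK a b
    have h2 := hK b a
    rw [show a - b = -(b - a) by module, inner_neg_right] at h2
    rw [show gradient f a - gradient f b = -(gradient f b - gradient f a) by module,
      norm_neg] at h2
    rw [inner_sub_left] at *
    have htβ' : t * ‖gradient f b - gradient f a‖ ^ 2 ≤ 1 / β * ‖gradient f b - gradient f a‖ ^ 2 := by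
      apply mul_le_mul_of_nonneg_right htβ (sq_nonneg _)
    have : 1 / (2 * β) * ‖gradient f b - gradient f a‖ ^ 2
        + 1 / (2 * β) * ‖gradient f b - gradient f a‖ ^ 2
        = 1 / β * ‖gradient f b - gradient f a‖ ^ 2 := by
      field_simp; ring
    linarith
  -- strong monotonicity
  have hS : ∀ a b : EuclideanSpace ℝ (Fin n), α * ‖b - a‖ ^ 2 ≤ ⟪gradient f b - gradient f a, b - a⟫ := by
    have dir_g : ∀ (x' d : EuclideanSpace ℝ (Fin n)) (τ : ℝ),
        HasDerivAt (fun σ => f (x' + σ • d) - α / 2 * ‖x' + σ • d‖ ^ 2)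
          ⟪gradient f (x' + τ • d) - α • (x' + τ • d), d⟫ τ := by
      intro x' d τ
      have := (dir_f x' d τ).sub (aux_dir_sq α x' d τ)
      rwa [← inner_sub_left] at this
    intro a b
    have h1 := aux_grad_ineq_s10 (g' := fun z => gradient f z - α • z) dir_g hsc a b
    have h2 := aux_grad_ineq_s10 (g' := fun z => gradient f z - α • z) dir_g hsc b a
    rw [show a - b = -(b - a) by module, inner_neg_right] at h2
    simp only [inner_sub_left, real_inner_smul_left] at h1 h2
    have e1 : ⟪b, b - a⟫ - ⟪a, b - a⟫ = ‖b - a‖ ^ 2 := by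
      rw [← inner_sub_left, real_inner_self_eq_norm_sq]
    rw [inner_sub_left]
    nlinarith
  -- contraction factor
  have h1tα : 0 ≤ 1 - t * α := by
    have h2 : t * α ≤ (1 / β) * β := by
      apply mul_le_mul htβ hαβ hα.le (by positivity)
    rw [one_div, inv_mul_cancel₀ hβ.ne'] at h2
    linarith
  have hρ0 : 0 ≤ Real.sqrt (1 - t * α) := Real.sqrt_nonneg _
  have hρsq : Real.sqrt (1 - t * α) ^ 2 = 1 - t * α := Real.sq_sqrt h1tα
  have hρ1 : Real.sqrt (1 - t * α) < 1 := by nlinarith [mul_pos ht0 hα]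
  set ρ : ℝ := Real.sqrt (1 - t * α) with hρ
  -- contraction of the forward gradient step
  have hC : ∀ z₁ z₂ : EuclideanSpace ℝ (Fin n),
      ‖(z₁ - t • gradient f z₁) - (z₂ - t • gradient f z₂)‖ ≤ ρ * ‖z₁ - z₂‖ := by
    intro z₁ z₂
    have he : (z₁ - t • gradient f z₁) - (z₂ - t • gradient f z₂)
        = (z₁ - z₂) - t • (gradient f z₁ - gradient f z₂) := by module
    rw [he]
    have hnorm : ‖(z₁ - z₂) - t • (gradient f z₁ - gradient f z₂)‖ ^ 2
        = ‖z₁ - z₂‖ ^ 2 - 2 * (t * ⟪z₁ - z₂, gradient f z₁ - gradient f z₂⟫)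
          + t ^ 2 * ‖gradient f z₁ - gradient f z₂‖ ^ 2 := by
      rw [norm_sub_sq_real, real_inner_smul_right, norm_smul]
      simp [mul_pow, Real.norm_eq_abs, sq_abs]
    have hco := coco z₂ z₁
    have hstr := hS z₂ z₁
    have hcomm := real_inner_comm (z₁ - z₂) (gradient f z₁ - gradient f z₂)
    have hsq2 : ‖(z₁ - z₂) - t • (gradient f z₁ - gradient f z₂)‖ ^ 2
        ≤ (ρ * ‖z₁ - z₂‖) ^ 2 := by
      rw [hnorm, mul_pow, hρsq]
      nlinarith [mul_le_mul_of_nonneg_left hco ht0.le,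
        mul_le_mul_of_nonneg_left hstr ht0.le]
    have hb : (0:ℝ) ≤ ρ * ‖z₁ - z₂‖ := mul_nonneg hρ0 (norm_nonneg _)
    exact (pow_le_pow_iff_left₀ (norm_nonneg _) hb two_ne_zero).mp hsq2
  have hKpos : 0 < ‖x - c‖ ^ 2 := by
    have hne : x - c ≠ 0 := sub_ne_zero_of_ne hxc
    have := norm_pos_iff.mpr hne
    positivity
  have hκ0 : 0 < (1 - ρ) * ‖x - c‖ ^ 2 := mul_pos (by linarith) hKpos
  -- two-sided increment bound
  have hboth : ∀ s₁ s₂ : ℝ, s₁ ≤ s₂ →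
      (1 - ρ) * ‖x - c‖ ^ 2 * (s₂ - s₁) ≤ φbar s₂ - φbar s₁ ∧
      φbar s₂ - φbar s₁ ≤ 2 * ‖x - c‖ ^ 2 * (s₂ - s₁) := by
    intro s₁ s₂ h12
    have eA : ∀ u₁ u₂ w₁ w₂ : EuclideanSpace ℝ (Fin n),
        ⟪u₂ - w₂, x - c⟫ - ⟪u₁ - w₁, x - c⟫ = ⟪u₂ - u₁, x - c⟫ - ⟪w₂ - w₁, x - c⟫ := by
      intro u₁ u₂ w₁ w₂
      rw [← inner_sub_left, ← inner_sub_left]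
      congr 1
      module
    have e2 : ⟪(x + s₂ • (c - x)) - (x + s₁ • (c - x)), x - c⟫
        = -((s₂ - s₁) * ‖x - c‖ ^ 2) := by
      rw [show (x + s₂ • (c - x)) - (x + s₁ • (c - x)) = -((s₂ - s₁) • (x - c)) by module,
        inner_neg_left, real_inner_smul_left, real_inner_self_eq_norm_sq]
    have hdiff : φbar s₂ - φbar s₁
        = ⟪P ((x + s₂ • (c - x)) - t • gradient f (x + s₂ • (c - x)))
            - P ((x + s₁ • (c - x)) - t • gradient f (x + s₁ • (c - x))), x - c⟫
          + (s₂ - s₁) * ‖x - c‖ ^ 2 := by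
      rw [hφbar s₂, hφbar s₁]
      have := eA (P ((x + s₁ • (c - x)) - t • gradient f (x + s₁ • (c - x))))
        (P ((x + s₂ • (c - x)) - t • gradient f (x + s₂ • (c - x))))
        (x + s₁ • (c - x)) (x + s₂ • (c - x))
      linarith [this, e2]
    have habs : |⟪P ((x + s₂ • (c - x)) - t • gradient f (x + s₂ • (c - x)))
        - P ((x + s₁ • (c - x)) - t • gradient f (x + s₁ • (c - x))), x - c⟫|
        ≤ ρ * ((s₂ - s₁) * ‖x - c‖ ^ 2) := by
      have h1 := abs_real_inner_le_norm
        (P ((x + s₂ • (c - x)) - t • gradient f (x + s₂ • (c - x)))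
          - P ((x + s₁ • (c - x)) - t • gradient f (x + s₁ • (c - x)))) (x - c)
      have h2 := aux_prox_nonexp ht0 hconv hP
        ((x + s₂ • (c - x)) - t • gradient f (x + s₂ • (c - x)))
        ((x + s₁ • (c - x)) - t • gradient f (x + s₁ • (c - x)))
      have h3 := hC (x + s₂ • (c - x)) (x + s₁ • (c - x))
      have h4 : ‖(x + s₂ • (c - x)) - (x + s₁ • (c - x))‖ = (s₂ - s₁) * ‖x - c‖ := by
        rw [show (x + s₂ • (c - x)) - (x + s₁ • (c - x)) = (s₂ - s₁) • (c - x) by module,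
          norm_smul, Real.norm_eq_abs, abs_of_nonneg (by linarith), norm_sub_rev]
      rw [h4] at h3
      nlinarith [norm_nonneg (x - c), norm_nonneg
        (P ((x + s₂ • (c - x)) - t • gradient f (x + s₂ • (c - x)))
          - P ((x + s₁ • (c - x)) - t • gradient f (x + s₁ • (c - x)))), abs_nonneg
        (⟪P ((x + s₂ • (c - x)) - t • gradient f (x + s₂ • (c - x)))
          - P ((x + s₁ • (c - x)) - t • gradient f (x + s₁ • (c - x))), x - c⟫)]
    obtain ⟨hl, hr⟩ := abs_le.mp habs
    constructor
    · rw [hdiff]; nlinarith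
    · rw [hdiff]; nlinarith
  -- φbar is continuous
  have hcont : Continuous φbar := by
    have hlipφ : LipschitzWith (Real.toNNReal (2 * ‖x - c‖ ^ 2)) φbar := by
      apply LipschitzWith.of_dist_le_mul
      intro a b
      rw [Real.dist_eq, Real.dist_eq, Real.coe_toNNReal _ (by positivity)]
      rcases le_total a b with hab | hab
      · obtain ⟨h1, h2⟩ := hboth a b hab
        rw [abs_sub_comm, abs_of_nonneg (by nlinarith), abs_sub_comm,
          abs_of_nonneg (by linarith)]
        linarith
      · obtain ⟨h1, h2⟩ := hboth b a hab
        rw [abs_of_nonneg (by nlinarith), abs_of_nonneg (by linarith)]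
        linarith
    exact hlipφ.continuous
  -- existence by IVT
  have hS0 : 0 < (1 - φbar 0) / ((1 - ρ) * ‖x - c‖ ^ 2) := div_pos (by linarith) hκ0
  set S : ℝ := (1 - φbar 0) / ((1 - ρ) * ‖x - c‖ ^ 2) with hSdef
  have hφS : 0 < φbar S := by
    have h1 := (hboth 0 S hS0.le).1
    have h2 : (1 - ρ) * ‖x - c‖ ^ 2 * (S - 0) = 1 - φbar 0 := by
      rw [hSdef]
      rw [sub_zero]; exact mul_div_cancel₀ _ hκ0.ne'
    linarith
  obtain ⟨s, hsm, hs0⟩ := intermediate_value_Ioo hS0.le hcont.continuousOn ⟨h0, hφS⟩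
  refine ⟨s, ⟨hsm.1, hs0⟩, fun s' hs' => ?_⟩
  rcases lt_trichotomy s' s with hlt | heq | hgt
  · exfalso
    have h1 := (hboth s' s hlt.le).1
    rw [hs0, hs'.2] at h1
    nlinarith
  · exact heq
  · exfalso
    have h1 := (hboth s s' hgt.le).1
    rw [hs0, hs'.2] at h1
    nlinarith
end

section
/- (Convergence of GeoPG with backtracking.) Let {t_k}_{k≥0} be positive step sizes with α·t_k ≤ 1 for all k, let {x_k}_{k≥0}, {c_k}_{k≥0} ⊆ ℝ^n and {R_k²}_{k≥0} ⊆ ℝ be sequences with c_0 = x_0 − G_{t_0}(x_0)/α and R_0² = (1 − α t_0)·‖G_{t_0}(x_0)‖²/α². Assume for every k ≥ 0 the line-search condition f(x_k^{+,t_k}) ≤ f(x_k) − t_k·⟨∇f(x_k), G_{t_k}(x_k)⟩ + (t_k/2)·‖G_{t_k}(x_k)‖² holds, and for every k ≥ 1: (a) F(x_k^{+,t_k}) ≤ F(x_{k−1}^{+,t_{k−1}}) − (t_k/2)·‖G_{t_k}(x_k)‖² and ‖x_k − G_{t_k}(x_k)/α − c_{k−1}‖² ≥ ‖G_{t_k}(x_k)‖²/α²;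 (b) R_k² = (1 − √(α t_k))·R_{k−1}² and, for every δ ≥ 0, B(c_{k−1}, R_{k−1}² − (t_k/α)·‖G_{t_k}(x_k)‖² − δ) ∩ B(x_k − G_{t_k}(x_k)/α, (1 − α t_k)·‖G_{t_k}(x_k)‖²/α² − δ) ⊆ B(c_k, R_k² − δ). Then for every k ≥ 0, x* ∈ B(c_k, R_k²), and ‖x* − c_k‖² ≤ (∏_{i=1}^{k} (1 − √(α t_i)))·R_0² ≤ (1 − √(α·min_{0≤i≤k} t_i))^k · R_0². -/
open scoped RealInnerProductSpace

lemma lineDeriv_aux {n : ℕ} (f : EuclideanSpace ℝ (Fin n) → ℝ) (hf : Differentiable ℝ f)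
    (x d : EuclideanSpace ℝ (Fin n)) :
    HasDerivAt (fun s : ℝ => f (x + s • d)) ⟪gradient f x, d⟫ 0 := by
  have hline : HasDerivAt (fun s : ℝ => x + s • d) d 0 := by
    simpa using ((hasDerivAt_id (0 : ℝ)).smul_const d).const_add x
  have hfd : HasFDerivAt f ((InnerProductSpace.toDual ℝ _) (gradient f x)) (x + (0:ℝ) • d) := by
    simpa using hasGradientAt_iff_hasFDerivAt.mp (hf _).hasGradientAt
  simpa [InnerProductSpace.toDual_apply_apply, Function.comp_def] using hfd.comp_hasDerivAt (0:ℝ) hline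

lemma convex_tangent_aux {n : ℕ} {g : EuclideanSpace ℝ (Fin n) → ℝ}
    (hg : ConvexOn ℝ Set.univ g) {x d : EuclideanSpace ℝ (Fin n)} {m : ℝ}
    (hd : HasDerivAt (fun s : ℝ => g (x + s • d)) m 0) :
    g x + m ≤ g (x + d) := by
  have heq : (fun s : ℝ => g (x + s • d)) = g ∘ ⇑(AffineMap.lineMap x (x + d)) := by
    funext s
    simp only [Function.comp_apply, AffineMap.lineMap_apply, vsub_eq_sub, vadd_eq_add]
    congr 1
    module
  have hφ : ConvexOn ℝ Set.univ (fun s : ℝ => g (x + s • d)) := by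
    rw [heq]
    simpa using hg.comp_affineMap (AffineMap.lineMap x (x + d))
  have := hφ.le_slope_of_hasDerivAt (Set.mem_univ (0:ℝ)) (Set.mem_univ (1:ℝ)) one_pos hd
  rw [slope_def_field] at this
  simp at this
  linarith

lemma strong_aux {n : ℕ} {α : ℝ} {f : EuclideanSpace ℝ (Fin n) → ℝ}
    (hsc : ConvexOn ℝ Set.univ (fun z => f z - α / 2 * ‖z‖ ^ 2))
    (hf : Differentiable ℝ f) (x z : EuclideanSpace ℝ (Fin n)) :
    f x + ⟪gradient f x, z - x⟫ + α / 2 * ‖z - x‖ ^ 2 ≤ f z := by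
  set d := z - x with hd
  have hnormsq : (fun s : ℝ => ‖x + s • d‖ ^ 2)
      = fun s : ℝ => ‖x‖ ^ 2 + 2 * ⟪x, d⟫ * s + ‖d‖ ^ 2 * s ^ 2 := by
    funext s
    rw [norm_add_sq_real, real_inner_smul_right, norm_smul]
    simp [Real.norm_eq_abs, mul_pow, sq_abs]
    ring
  have hpoly : HasDerivAt (fun s : ℝ => ‖x + s • d‖ ^ 2) (2 * ⟪x, d⟫) 0 := by
    rw [hnormsq]
    have h1 : HasDerivAt (fun s : ℝ => 2 * ⟪x, d⟫ * s) (2 * ⟪x, d⟫) 0 := by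
      simpa using (hasDerivAt_id (0:ℝ)).const_mul (2 * ⟪x, d⟫)
    have h2 : HasDerivAt (fun s : ℝ => ‖d‖ ^ 2 * s ^ 2) (‖d‖ ^ 2 * (2 * 0)) 0 := by
      have := (hasDerivAt_pow 2 (0:ℝ)).const_mul (‖d‖ ^ 2)
      simpa using this
    have := (h1.add h2).const_add (‖x‖ ^ 2)
    simpa [add_assoc] using this
  have hder : HasDerivAt (fun s : ℝ => f (x + s • d) - α / 2 * ‖x + s • d‖ ^ 2)
      (⟪gradient f x, d⟫ - α / 2 * (2 * ⟪x, d⟫)) 0 :=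
    (lineDeriv_aux f hf x d).sub (hpoly.const_mul (α / 2))
  have key := convex_tangent_aux hsc hder
  have hxd : x + d = z := by rw [hd]; abel
  rw [hxd] at key
  have hz : ‖z‖ ^ 2 = ‖x‖ ^ 2 + 2 * ⟪x, d⟫ + ‖d‖ ^ 2 := by
    have h' : z = x + d := hxd.symm
    rw [h', norm_add_sq_real]
  rw [hz] at key
  linarith

lemma prox_aux {n : ℕ} {h : EuclideanSpace ℝ (Fin n) → ℝ}
    (hconv : ConvexOn ℝ Set.univ h) {s : ℝ} (hs : 0 < s)
    {v p : EuclideanSpace ℝ (Fin n)}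
    (hp : IsMinOn (fun u => s * h u + ‖u - v‖ ^ 2 / 2) Set.univ p)
    (z : EuclideanSpace ℝ (Fin n)) :
    ⟪v - p, z - p⟫ ≤ s * (h z - h p) := by
  have step : ∀ lam : ℝ, 0 < lam → lam ≤ 1 →
      ⟪v - p, z - p⟫ ≤ s * (h z - h p) + lam * (‖z - p‖ ^ 2 / 2) := by
    intro lam h0 h1
    set w := p + lam • (z - p) with hwdef
    have Hmin : s * h p + ‖p - v‖ ^ 2 / 2 ≤ s * h w + ‖w - v‖ ^ 2 / 2 :=
      hp (Set.mem_univ w)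
    have hw2 : w = (1 - lam) • p + lam • z := by rw [hwdef]; module
    have Hconv : h w ≤ (1 - lam) * h p + lam * h z := by
      have := hconv.2 (Set.mem_univ p) (Set.mem_univ z)
        (by linarith : (0:ℝ) ≤ 1 - lam) h0.le (by ring)
      simpa [hw2] using this
    have Hexp : ‖w - v‖ ^ 2 = ‖p - v‖ ^ 2 + 2 * lam * ⟪p - v, z - p⟫
        + lam ^ 2 * ‖z - p‖ ^ 2 := by
      have hwv : w - v = (p - v) + lam • (z - p) := by rw [hwdef]; module
      rw [hwv, norm_add_sq_real, real_inner_smul_right, norm_smul]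
      simp [Real.norm_eq_abs, mul_pow, sq_abs]
      ring
    have Hneg : ⟪p - v, z - p⟫ = -⟪v - p, z - p⟫ := by
      rw [show p - v = -(v - p) by abel, inner_neg_left]
    have H : 0 ≤ lam * (s * (h z - h p) - ⟪v - p, z - p⟫ + lam * (‖z - p‖ ^ 2 / 2)) := by
      nlinarith [mul_le_mul_of_nonneg_left Hconv hs.le]
    nlinarith [H, h0]
  refine le_of_forall_pos_le_add ?_
  intro ε hε
  have hC : (0:ℝ) ≤ ‖z - p‖ ^ 2 / 2 := by positivity
  set C := ‖z - p‖ ^ 2 / 2 with hCdef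
  have hlam0 : 0 < min 1 (ε / (C + 1)) := by
    apply lt_min one_pos
    positivity
  have hstep := step (min 1 (ε / (C + 1))) hlam0 (min_le_left _ _)
  have hle : min 1 (ε / (C + 1)) * C ≤ ε := by
    have h2 : min 1 (ε / (C + 1)) ≤ ε / (C + 1) := min_le_right _ _
    have h4 := mul_le_mul_of_nonneg_right h2 hC
    have h3 : ε / (C + 1) * C ≤ ε := by
      rw [div_mul_eq_mul_div, div_le_iff₀ (by linarith)]
      nlinarith
    linarith
  linarith
/-- convergence of GeoPG with backtracking. Here `P s v = Prox_{sh}(v)`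
for step size `s > 0`, `xp k = (x k)^{+,t k}`, `G k = G_{t k}(x k)`, and `F = f + h`
with minimizer `x*`. -/
theorem stmt_14 (n : ℕ) (α : ℝ) (hα : 0 < α)
    (f h : EuclideanSpace ℝ (Fin n) → ℝ)
    (hsc : ConvexOn ℝ Set.univ (fun z => f z - α / 2 * ‖z‖ ^ 2))
    (hf : Differentiable ℝ f)
    (hconv : ConvexOn ℝ Set.univ h) (hlsc : LowerSemicontinuous h)
    (xstar : EuclideanSpace ℝ (Fin n))
    (hmin : IsMinOn (fun z => f z + h z) Set.univ xstar)
    (P : ℝ → EuclideanSpace ℝ (Fin n) → EuclideanSpace ℝ (Fin n))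
    (hP : ∀ s : ℝ, 0 < s → ∀ v, IsMinOn (fun u => s * h u + ‖u - v‖ ^ 2 / 2)
      Set.univ (P s v))
    (t : ℕ → ℝ) (htpos : ∀ k, 0 < t k) (htα : ∀ k, α * t k ≤ 1)
    (x c xp G : ℕ → EuclideanSpace ℝ (Fin n)) (R2 : ℕ → ℝ)
    (hxp : ∀ k, xp k = P (t k) (x k - t k • gradient f (x k)))
    (hG : ∀ k, G k = (t k)⁻¹ • (x k - xp k))
    (hc0 : c 0 = x 0 - α⁻¹ • G 0)
    (hR0 : R2 0 = (1 - α * t 0) * ‖G 0‖ ^ 2 / α ^ 2)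
    (hline : ∀ k, f (xp k) ≤ f (x k) - t k * ⟪gradient f (x k), G k⟫
      + t k / 2 * ‖G k‖ ^ 2)
    (ha : ∀ k, 1 ≤ k →
      f (xp k) + h (xp k) ≤ (f (xp (k - 1)) + h (xp (k - 1))) - t k / 2 * ‖G k‖ ^ 2
        ∧ ‖x k - α⁻¹ • G k - c (k - 1)‖ ^ 2 ≥ ‖G k‖ ^ 2 / α ^ 2)
    (hb1 : ∀ k, 1 ≤ k → R2 k = (1 - Real.sqrt (α * t k)) * R2 (k - 1))
    (hb2 : ∀ k, 1 ≤ k → ∀ δ : ℝ, 0 ≤ δ →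
      B (c (k - 1)) (R2 (k - 1) - t k / α * ‖G k‖ ^ 2 - δ)
          ∩ B (x k - α⁻¹ • G k) ((1 - α * t k) * ‖G k‖ ^ 2 / α ^ 2 - δ)
        ⊆ B (c k) (R2 k - δ)) :
    ∀ k : ℕ,
      xstar ∈ B (c k) (R2 k)
        ∧ ‖xstar - c k‖ ^ 2 ≤ (∏ i ∈ Finset.Icc 1 k, (1 - Real.sqrt (α * t i))) * R2 0
        ∧ (∏ i ∈ Finset.Icc 1 k, (1 - Real.sqrt (α * t i))) * R2 0
            ≤ (1 - Real.sqrt (α * Finset.inf' (Finset.range (k + 1))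
                (Finset.nonempty_range_iff.mpr k.succ_ne_zero) t)) ^ k * R2 0 := by
  -- notation
  set δf : ℕ → ℝ := fun k => 2 / α * (f (xp k) + h (xp k) - (f xstar + h xstar)) with hδf
  have hFmin : ∀ z, f xstar + h xstar ≤ f z + h z := fun z => hmin (Set.mem_univ z)
  have hδ0 : ∀ k, 0 ≤ δf k := by
    intro k
    have := hFmin (xp k)
    have h2α : (0:ℝ) ≤ 2 / α := by positivity
    rw [hδf]
    exact mul_nonneg h2α (by linarith)
  have hxG : ∀ k, x k - xp k = t k • G k := by
    intro k
    rw [hG k, smul_smul, mul_inv_cancel₀ (htpos k).ne', one_smul]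
  -- key inequality
  have key : ∀ k, ‖xstar - (x k - α⁻¹ • G k)‖ ^ 2
      ≤ (1 - α * t k) * ‖G k‖ ^ 2 / α ^ 2 - δf k := by
    intro k
    set a := gradient f (x k) with hadef
    set g := G k with hgdef
    set d := xstar - x k with hddef
    -- strong convexity
    have A1 : f (x k) + ⟪a, d⟫ + α / 2 * ‖d‖ ^ 2 ≤ f xstar := strong_aux hsc hf (x k) xstar
    -- line search
    have A2 := hline k
    -- prox inequality
    have hprox := prox_aux hconv (htpos k) (hP (t k) (htpos k) (x k - t k • a)) xstar
    rw [← hxp k] at hprox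
    have e1 : x k - t k • a - xp k = t k • g - t k • a := by
      rw [← hxG k]; abel
    have e2 : xstar - xp k = d + t k • g := by
      rw [hddef, ← hxG k]; abel
    rw [e1, e2] at hprox
    have e3 : ⟪t k • g - t k • a, d + t k • g⟫
        = t k * (⟪g, d⟫ + t k * ‖g‖ ^ 2 - ⟪a, d⟫ - t k * ⟪a, g⟫) := by
      simp only [inner_sub_left, inner_add_right, real_inner_smul_left, real_inner_smul_right,
        real_inner_self_eq_norm_sq, norm_smul, Real.norm_eq_abs, mul_pow, sq_abs]
      ring
    rw [e3] at hprox
    have A3 : ⟪g, d⟫ + t k * ‖g‖ ^ 2 - ⟪a, d⟫ - t k * ⟪a, g⟫ ≤ h xstar - h (xp k) :=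
      (mul_le_mul_iff_right₀ (htpos k)).mp hprox
    have A4 : f (xp k) + h (xp k) - (f xstar + h xstar)
        ≤ -(α / 2 * ‖d‖ ^ 2) - ⟪g, d⟫ - t k / 2 * ‖g‖ ^ 2 := by linarith
    have E : ‖xstar - (x k - α⁻¹ • g)‖ ^ 2
        = ‖d‖ ^ 2 + 2 * α⁻¹ * ⟪g, d⟫ + α⁻¹ ^ 2 * ‖g‖ ^ 2 := by
      have e4 : xstar - (x k - α⁻¹ • g) = d + α⁻¹ • g := by rw [hddef]; module
      rw [e4, norm_add_sq_real, real_inner_smul_right, real_inner_comm d g, norm_smul,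
        Real.norm_eq_abs, mul_pow, sq_abs]
      ring
    have heq : ‖d‖ ^ 2 + 2 * α⁻¹ * ⟪g, d⟫ + α⁻¹ ^ 2 * ‖g‖ ^ 2
        + 2 / α * (-(α / 2 * ‖d‖ ^ 2) - ⟪g, d⟫ - t k / 2 * ‖g‖ ^ 2)
        = (1 - α * t k) * ‖g‖ ^ 2 / α ^ 2 := by
      field_simp
      ring
    have hA4' := mul_le_mul_of_nonneg_left A4 (by positivity : (0:ℝ) ≤ 2 / α)
    rw [E, hδf]
    linarith
  -- main induction
  have main : ∀ k, ‖xstar - c k‖ ^ 2 ≤ R2 k - δf k := by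
    intro k
    induction k with
    | zero =>
      rw [hc0, hR0]
      exact key 0
    | succ k ih =>
      have h1 := ha (k + 1) (Nat.le_add_left 1 k)
      simp only [Nat.add_sub_cancel] at h1
      have hmem : xstar ∈ B (c (k + 1)) (R2 (k + 1) - δf (k + 1)) := by
        have hsub := hb2 (k + 1) (Nat.le_add_left 1 k) (δf (k + 1)) (hδ0 (k + 1))
        simp only [Nat.add_sub_cancel] at hsub
        apply hsub
        constructor
        · show ‖xstar - c k‖ ^ 2 ≤ R2 k - t (k + 1) / α * ‖G (k + 1)‖ ^ 2 - δf (k + 1)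
          have hmul := mul_le_mul_of_nonneg_left h1.1 (by positivity : (0:ℝ) ≤ 2 / α)
          have heq2 : 2 / α * ((f (xp k) + h (xp k)) - t (k + 1) / 2 * ‖G (k + 1)‖ ^ 2)
              = 2 / α * (f (xp k) + h (xp k)) - t (k + 1) / α * ‖G (k + 1)‖ ^ 2 := by
            field_simp
          simp only [hδf] at ih ⊢
          linarith [hmul, ih, heq2]
        · exact key (k + 1)
      exact hmem
  have hR2nonneg0 : 0 ≤ R2 0 := by
    rw [hR0]
    have := htα 0
    have : (0:ℝ) ≤ 1 - α * t 0 := by linarith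
    positivity
  have prodR : ∀ k, R2 k = (∏ i ∈ Finset.Icc 1 k, (1 - Real.sqrt (α * t i))) * R2 0 := by
    intro k
    induction k with
    | zero => simp
    | succ k ih =>
      have := hb1 (k + 1) (Nat.le_add_left 1 k)
      simp only [Nat.add_sub_cancel] at this
      rw [this, ih, Finset.prod_Icc_succ_top (Nat.le_add_left 1 k)]
      ring
  intro k
  -- part 1
  have part1 : xstar ∈ B (c k) (R2 k) := by
    show ‖xstar - c k‖ ^ 2 ≤ R2 k
    have := main k
    have := hδ0 k
    linarith
  refine ⟨part1, ?_, ?_⟩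
  · rw [← prodR k]
    exact part1
  · set m := Finset.inf' (Finset.range (k + 1))
      (Finset.nonempty_range_iff.mpr k.succ_ne_zero) t with hm
    obtain ⟨j, hj, hjm⟩ := Finset.exists_mem_eq_inf' (Finset.nonempty_range_iff.mpr k.succ_ne_zero) t
    have hmpos : 0 < m := by rw [hm, hjm]; exact htpos j
    have hmα : α * m ≤ 1 := by rw [hm, hjm]; exact htα j
    have hsm : Real.sqrt (α * m) ≤ 1 := Real.sqrt_le_one.mpr hmα
    have hbound : ∀ i ∈ Finset.Icc 1 k,
        (1 - Real.sqrt (α * t i)) ≤ (1 - Real.sqrt (α * m)) := by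
      intro i hi
      have hik : i ∈ Finset.range (k + 1) := by
        rw [Finset.mem_range]
        exact Nat.lt_succ_of_le (Finset.mem_Icc.mp hi).2
      have hmi : m ≤ t i := Finset.inf'_le t hik
      have := Real.sqrt_le_sqrt (mul_le_mul_of_nonneg_left hmi hα.le)
      linarith
    have hnn : ∀ i ∈ Finset.Icc 1 k, 0 ≤ (1 - Real.sqrt (α * t i)) := by
      intro i hi
      have := Real.sqrt_le_one.mpr (htα i)
      linarith
    have hprod : (∏ i ∈ Finset.Icc 1 k, (1 - Real.sqrt (α * t i)))
        ≤ (1 - Real.sqrt (α * m)) ^ k := by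
      calc (∏ i ∈ Finset.Icc 1 k, (1 - Real.sqrt (α * t i)))
          ≤ ∏ i ∈ Finset.Icc 1 k, (1 - Real.sqrt (α * m)) :=
            Finset.prod_le_prod hnn hbound
        _ = (1 - Real.sqrt (α * m)) ^ k := by
            rw [Finset.prod_const, Nat.card_Icc]
            simp
    exact mul_le_mul_of_nonneg_right hprod hR2nonneg0
end
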